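/- arXiv:2306.15234 — 2 statements merged into one kernel-verified Lean document; each statement's English description precedes it below -/
import Mathlib

section
/- Let n ≥ 1 and let m be a positive integer. Then there exists a constant C_m > 0 such that for every φ ∈ L¹_m(ℝⁿ) and t > 0, the estimate Σ_{|α|=m} ‖x^α e^{tΔ}φ − e^{tΔ}(x^α φ)‖₁ ≤ C_m { t^{1/2} ‖ |x|^{m−1} φ ‖₁ + (t^{1/2} + t^{m/2}) ‖φ‖₁ } holds. -/
open MeasureTheory Real Filter
open scoped ENNReal

noncomputable section

/-- `ℝⁿ` as a Euclidean space. -/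
abbrev Rn (n : ℕ) : Type := EuclideanSpace ℝ (Fin n)

/-- The Gauss kernel `G_t(x) = (4πt)^{-n/2} exp(-|x|²/(4t))`. -/
noncomputable def heatKernel (n : ℕ) (t : ℝ) (x : Rn n) : ℝ :=
  (4 * π * t) ^ (-(n : ℝ) / 2) * Real.exp (-‖x‖ ^ 2 / (4 * t))

/-- The heat semigroup `e^{tΔ}φ = G_t ∗ φ` for `t > 0`, and `e^{0Δ}φ = φ`. -/
noncomputable def heatSG (n : ℕ) (t : ℝ) (φ : Rn n → ℝ) : Rn n → ℝ :=
  if t = 0 then φ else fun x => ∫ y : Rn n, heatKernel n t (x - y) * φ y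

/-- The Gauss kernel at time `1`. -/
noncomputable def gaussOne (n : ℕ) : Rn n → ℝ := heatKernel n 1

/-- The dilation `(δ_t ψ)(x) = t^{-n/2} ψ(t^{-1/2} x)`. -/
noncomputable def dil (n : ℕ) (t : ℝ) (ψ : Rn n → ℝ) : Rn n → ℝ :=
  fun x => t ^ (-(n : ℝ) / 2) * ψ ((t ^ (-(1 : ℝ) / 2) : ℝ) • x)

/-- The monomial `x^α = ∏ x_j^{α_j}` for a multi-index `α`. -/
noncomputable def mono (n : ℕ) (α : Fin n → ℕ) (x : Rn n) : ℝ := ∏ j, x j ^ α j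

/-- Membership in the weighted space `L¹_m(ℝⁿ)`:
`x^α φ ∈ L¹` for every multi-index `α` with `|α| ≤ m`. -/
def MemL1m (n m : ℕ) (φ : Rn n → ℝ) : Prop :=
  ∀ α : Fin n → ℕ, (∑ j, α j) ≤ m →
    MemLp (fun x => mono n α x * φ x) 1 (volume : Measure (Rn n))

/-- The partial derivative `∂_j`. -/
noncomputable def pd (n : ℕ) (j : Fin n) (f : Rn n → ℝ) : Rn n → ℝ :=
  fun x => fderiv ℝ f x (EuclideanSpace.single j 1)

/-- The partial derivative `∂^α` of multi-order `α`. -/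
noncomputable def pdMulti (n : ℕ) (α : Fin n → ℕ) (f : Rn n → ℝ) : Rn n → ℝ :=
  (List.finRange n).foldr (fun j g => (pd n j)^[α j] g) f

/-- The rescaled Hermite polynomial
`h_α(x) = Σ_{2β ≤ α} ((−1)^{|β|} α!/(β!(α−2β)!)) x^{α−2β}`. -/
noncomputable def hPoly (n : ℕ) (α : Fin n → ℕ) (x : Rn n) : ℝ :=
  ∑ β ∈ (Finset.Iic α).filter (fun β => ∀ j, 2 * β j ≤ α j),
    (-1 : ℝ) ^ (∑ j, β j) * (∏ j, ((α j).factorial : ℝ)) /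
        ((∏ j, ((β j).factorial : ℝ)) * (∏ j, ((α j - 2 * β j).factorial : ℝ))) *
      ∏ j, x j ^ (α j - 2 * β j)

/-- The decay exponent `(n/2)(1 - 1/q)`. -/
noncomputable def expo (n : ℕ) (q : ℝ≥0∞) : ℝ := (n : ℝ) / 2 * (1 - (1 / q).toReal)

/-- `u` is a global solution in
`X = (C ∩ L^∞)([0,∞); L¹) ∩ (C ∩ L^∞)((0,∞); L^∞)` of the integral equation
`u(t) = e^{tΔ}φ + ∫₀ᵗ e^{(t-s)Δ} f(u(s)) ds`. -/
structure IsGlobalSolution (n : ℕ) (f : ℝ → ℝ) (φ : Rn n → ℝ) (u : ℝ → Rn n → ℝ) : Prop where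
  memL1 : ∀ t : ℝ, 0 ≤ t → MemLp (u t) 1 (volume : Measure (Rn n))
  memLinf : ∀ t : ℝ, 0 < t → MemLp (u t) ⊤ (volume : Measure (Rn n))
  bddL1 : ∃ M : ℝ≥0∞, M ≠ ⊤ ∧ ∀ t : ℝ, 0 ≤ t → eLpNorm (u t) 1 (volume : Measure (Rn n)) ≤ M
  bddLinf : ∃ M : ℝ≥0∞, M ≠ ⊤ ∧ ∀ t : ℝ, 0 < t → eLpNorm (u t) ⊤ (volume : Measure (Rn n)) ≤ M
  contL1 : ∀ t₀ : ℝ, 0 ≤ t₀ →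
    Tendsto (fun t => eLpNorm (fun x => u t x - u t₀ x) 1 (volume : Measure (Rn n)))
      (nhdsWithin t₀ (Set.Ici 0)) (nhds 0)
  contLinf : ∀ t₀ : ℝ, 0 < t₀ →
    Tendsto (fun t => eLpNorm (fun x => u t x - u t₀ x) ⊤ (volume : Measure (Rn n)))
      (nhdsWithin t₀ (Set.Ioi 0)) (nhds 0)
  inteq : ∀ t : ℝ, 0 ≤ t → ∀ᵐ x : Rn n, u t x =
    heatSG n t φ x + ∫ s in Set.Ioc (0 : ℝ) t, heatSG n (t - s) (fun y => f (u s y)) x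

/-- `sup_{q ∈ [1,∞]} sup_{t ≥ 0} (1+t)^{(n/2)(1−1/q)} ‖u(t)‖_q < +∞`. -/
def DecayBound (n : ℕ) (u : ℝ → Rn n → ℝ) : Prop :=
  ∃ M : ℝ≥0∞, M ≠ ⊤ ∧ ∀ q : ℝ≥0∞, 1 ≤ q → ∀ t : ℝ, 0 ≤ t →
    ENNReal.ofReal ((1 + t) ^ expo n q) * eLpNorm (u t) q (volume : Measure (Rn n)) ≤ M

/-- `ε₀` is a smallness constant: for every initial datum `φ ∈ L¹ ∩ L^∞` with
`‖φ‖₁ + ‖φ‖_∞ ≤ ε₀` there is a global solution in `X`, satisfying the decay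
estimate, and it is unique in `X`. -/
def IsSmallnessConstant (n : ℕ) (f : ℝ → ℝ) (ε₀ : ℝ) : Prop :=
  0 < ε₀ ∧ ∀ φ : Rn n → ℝ, MemLp φ 1 (volume : Measure (Rn n)) →
    MemLp φ ⊤ (volume : Measure (Rn n)) →
    eLpNorm φ 1 (volume : Measure (Rn n)) + eLpNorm φ ⊤ (volume : Measure (Rn n)) ≤
      ENNReal.ofReal ε₀ →
    ∃ u : ℝ → Rn n → ℝ, (IsGlobalSolution n f φ u ∧ DecayBound n u) ∧
      ∀ v : ℝ → Rn n → ℝ, IsGlobalSolution n f φ v →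
        ∀ t : ℝ, 0 ≤ t → v t =ᵐ[(volume : Measure (Rn n))] u t

/-- `φ₁ = φ + ∫₀^∞ f(u(s)) ds`. -/
noncomputable def phiOne (n : ℕ) (f : ℝ → ℝ) (φ : Rn n → ℝ) (u : ℝ → Rn n → ℝ) : Rn n → ℝ :=
  fun x => φ x + ∫ s in Set.Ioi (0 : ℝ), f (u s x)

/-- The approximating sequence: `u₁(t) = e^{tΔ}φ₁` and for `N ≥ 2`,
`u_N(t) = e^{tΔ}φ_N + ∫₀ᵗ e^{(t−s)Δ} f(u_{N−1}(s)) ds` with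
`φ_N = φ + ∫₀^∞ (f(u(s)) − f(u_{N−1}(s))) ds`. -/
noncomputable def uSeq (n : ℕ) (f : ℝ → ℝ) (φ : Rn n → ℝ) (u : ℝ → Rn n → ℝ) :
    ℕ → ℝ → Rn n → ℝ
  | 0 => fun _ _ => 0
  | 1 => fun t => heatSG n t (phiOne n f φ u)
  | (N + 2) => fun t x =>
      heatSG n t (fun y => φ y +
        ∫ s in Set.Ioi (0 : ℝ), (f (u s y) - f (uSeq n f φ u (N + 1) s y))) x +
      ∫ s in Set.Ioc (0 : ℝ) t, heatSG n (t - s) (fun y => f (uSeq n f φ u (N + 1) s y)) x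

/-- The moment coefficient `c_α = (1/α!) ∫ y^α ψ(y) dy`. -/
noncomputable def momentCoeff (n : ℕ) (ψ : Rn n → ℝ) (α : Fin n → ℕ) : ℝ :=
  (∏ j, ((α j).factorial : ℝ))⁻¹ * ∫ y : Rn n, mono n α y * ψ y

/-- The `m`-th order asymptotic profile
`Σ_{k=0}^m 2^{−k} t^{−k/2} Σ_{|α|=k} c_α δ_t(h_α G₁)` with moments of `ψ`. -/
noncomputable def expansion (n m : ℕ) (ψ : Rn n → ℝ) (t : ℝ) (x : Rn n) : ℝ :=
  ∑ k ∈ Finset.range (m + 1), (2 : ℝ) ^ (-(k : ℤ)) * t ^ (-(k : ℝ) / 2) *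
    ∑ α ∈ Finset.Nat.antidiagonalTuple n k,
      momentCoeff n ψ α * dil n t (fun z => hPoly n α z * gaussOne n z) x

end

section Aux

section AuxLemmas

lemma abs_coord_le {n : ℕ} (x : Rn n) (j : Fin n) : |x j| ≤ ‖x‖ := by
  rw [EuclideanSpace.norm_eq]
  have : |x j| = Real.sqrt (|x j|^2) := by rw [Real.sqrt_sq_eq_abs, abs_abs]
  rw [this]
  apply Real.sqrt_le_sqrt
  have := Finset.single_le_sum (f := fun i => ‖x i‖^2) (fun i _ => by positivity) (Finset.mem_univ j)
  simpa using this

lemma young_pow {s c : ℝ} (hs : 0 ≤ s) (hc : 0 ≤ c) {i m : ℕ} (h1 : 1 ≤ i) (him : i ≤ m) :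
    s ^ i * c ^ (m - i) ≤ s * c ^ (m - 1) + s ^ m := by
  rcases le_total c s with h | h
  · have : s ^ i * c ^ (m - i) ≤ s ^ i * s ^ (m - i) :=
      mul_le_mul_of_nonneg_left (pow_le_pow_left₀ hc h _) (by positivity)
    rw [← pow_add, Nat.add_sub_cancel' him] at this
    nlinarith [mul_nonneg hs (pow_nonneg hc (m-1))]
  · have : s ^ i * c ^ (m - i) ≤ s * (c ^ (i - 1) * c ^ (m - i)) := by
      have h2 : s ^ i = s * s ^ (i - 1) := by
        conv_lhs => rw [show i = (i-1)+1 by omega]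
        rw [pow_succ]; ring
      rw [h2, mul_assoc]
      refine mul_le_mul_of_nonneg_left (mul_le_mul_of_nonneg_right (pow_le_pow_left₀ hs h _) (by positivity)) hs
    rw [← pow_add] at this
    have he : i - 1 + (m - i) = m - 1 := by omega
    rw [he] at this
    nlinarith [pow_nonneg hs m]

lemma pow_mul_exp_le (i : ℕ) {x : ℝ} (hx : 0 ≤ x) : x ^ i * Real.exp (-x) ≤ (Nat.factorial i : ℝ) := by
  have h1 : x ^ i / (Nat.factorial i : ℝ) ≤ Real.exp x := by
    calc x ^ i / (Nat.factorial i : ℝ) ≤ ∑ j ∈ Finset.range (i+1), (x ^ j / (Nat.factorial j : ℝ)) := by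
          exact Finset.single_le_sum (f := fun j => x^j / (Nat.factorial j : ℝ)) (fun j _ => by positivity)
            (Finset.self_mem_range_succ i)
      _ ≤ Real.exp x := Real.sum_le_exp_of_nonneg hx _
  have hfac : (0:ℝ) < (Nat.factorial i : ℝ) := by positivity
  rw [div_le_iff₀ hfac] at h1
  have := Real.exp_pos x
  calc x ^ i * Real.exp (-x) ≤ (Real.exp x * (Nat.factorial i : ℝ)) * Real.exp (-x) := by
        exact mul_le_mul_of_nonneg_right h1 (Real.exp_pos _).le
    _ = (Nat.factorial i : ℝ) := by rw [mul_comm (Real.exp x), mul_assoc, ← Real.exp_add]; simp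

lemma poly_exp_le (i : ℕ) {x : ℝ} (hx : 0 ≤ x) : (1 + 8*x) ^ i * Real.exp (-x) ≤ 9 ^ i * (Nat.factorial i : ℝ) := by
  rcases le_total x 1 with h | h
  · have h9 : (1 + 8*x) ^ i ≤ 9 ^ i := by
      apply pow_le_pow_left₀ (by linarith) (by linarith)
    have : Real.exp (-x) ≤ 1 := Real.exp_le_one_iff.mpr (by linarith)
    have hfac : (1:ℝ) ≤ (Nat.factorial i : ℝ) := by exact_mod_cast Nat.one_le_iff_ne_zero.mpr (Nat.factorial_ne_zero i)
    nlinarith [pow_nonneg (by linarith : (0:ℝ) ≤ 1 + 8*x) i, pow_pos (by norm_num : (0:ℝ) < 9) i]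
  · have h9 : (1 + 8*x) ^ i ≤ (9*x) ^ i := by
      apply pow_le_pow_left₀ (by linarith) (by linarith)
    calc (1 + 8*x) ^ i * Real.exp (-x) ≤ (9*x) ^ i * Real.exp (-x) := by
          exact mul_le_mul_of_nonneg_right h9 (Real.exp_pos _).le
      _ = 9 ^ i * (x ^ i * Real.exp (-x)) := by rw [mul_pow]; ring
      _ ≤ 9 ^ i * (Nat.factorial i : ℝ) := by
          exact mul_le_mul_of_nonneg_left (pow_mul_exp_le i hx) (by positivity)

lemma nat_choose_le_two_pow (a b : ℕ) : a.choose b ≤ 2 ^ a := by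
  rcases le_or_gt b a with h | h
  · calc a.choose b ≤ ∑ i ∈ Finset.range (a+1), a.choose i :=
        Finset.single_le_sum (fun i _ => Nat.zero_le _) (Finset.mem_range.mpr (by omega))
      _ = 2 ^ a := Nat.sum_range_choose a
  · rw [Nat.choose_eq_zero_of_lt h]; positivity

lemma mono_diff {n m : ℕ} (α : Fin n → ℕ) (hα : ∑ j, α j = m) (x y : Rn n) :
    |mono n α x - mono n α y| ≤
      4 ^ m * ∑ i ∈ Finset.Icc 1 m, ‖x - y‖ ^ i * ‖y‖ ^ (m - i) := by
  classical
  set z : Rn n := x - y with hz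
  have hxy : ∀ j, x j = z j + y j := by
    intro j; simp [hz]
  set S := Fintype.piFinset (fun j : Fin n => Finset.range (α j + 1)) with hS
  have hexp : mono n α x =
      ∑ β ∈ S, ∏ j, ((α j).choose (β j) : ℝ) * z j ^ (β j) * y j ^ (α j - β j) := by
    unfold mono
    calc (∏ j, x j ^ α j) = ∏ j, (z j + y j) ^ α j := by
          apply Finset.prod_congr rfl; intro j _; rw [hxy j]
      _ = ∏ j, ∑ k ∈ Finset.range (α j + 1),
            ((α j).choose k : ℝ) * z j ^ k * y j ^ (α j - k) := by
          apply Finset.prod_congr rfl; intro j _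
          rw [add_pow]
          apply Finset.sum_congr rfl; intro k _; ring
      _ = _ := by rw [Finset.prod_univ_sum]
  have h0S : (0 : Fin n → ℕ) ∈ S := by
    rw [hS, Fintype.mem_piFinset]; intro j; simp
  have h0term : (∏ j, ((α j).choose ((0 : Fin n → ℕ) j) : ℝ) * z j ^ ((0:Fin n → ℕ) j)
      * y j ^ (α j - (0:Fin n → ℕ) j)) = mono n α y := by
    unfold mono; apply Finset.prod_congr rfl; intro j _; simp
  have hsplit : mono n α x - mono n α y =
      ∑ β ∈ S.erase 0, ∏ j, ((α j).choose (β j) : ℝ) * z j ^ (β j) * y j ^ (α j - β j) := by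
    rw [hexp, ← Finset.add_sum_erase S _ h0S, h0term]; ring
  rw [hsplit]
  set T : ℝ := ∑ i ∈ Finset.Icc 1 m, ‖z‖ ^ i * ‖y‖ ^ (m - i) with hT
  have hTnn : 0 ≤ T := by
    apply Finset.sum_nonneg; intro i _; positivity
  have hterm : ∀ β ∈ S.erase 0,
      |∏ j, ((α j).choose (β j) : ℝ) * z j ^ (β j) * y j ^ (α j - β j)| ≤ 2 ^ m * T := by
    intro β hβ
    have hβS : β ∈ S := Finset.mem_of_mem_erase hβ
    have hβle : ∀ j, β j ≤ α j := by
      intro j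
      have := (Fintype.mem_piFinset.mp hβS) j
      simpa [Nat.lt_succ_iff] using this
    have hβ0 : β ≠ 0 := Finset.ne_of_mem_erase hβ
    have hsum_le : ∑ j, β j ≤ m := hα ▸ Finset.sum_le_sum (fun j _ => hβle j)
    have hsum_ge : 1 ≤ ∑ j, β j := by
      by_contra h
      push_neg at h
      apply hβ0
      funext j
      have : ∑ j, β j = 0 := by omega
      have := Finset.sum_eq_zero_iff.mp this j (Finset.mem_univ j)
      simpa using this
    have habs : |∏ j, ((α j).choose (β j) : ℝ) * z j ^ (β j) * y j ^ (α j - β j)|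
        ≤ (∏ j, ((α j).choose (β j) : ℝ)) * (‖z‖ ^ (∑ j, β j) * ‖y‖ ^ (∑ j, (α j - β j))) := by
      rw [Finset.abs_prod]
      rw [← Finset.prod_pow_eq_pow_sum, ← Finset.prod_pow_eq_pow_sum, ← Finset.prod_mul_distrib,
        ← Finset.prod_mul_distrib]
      apply Finset.prod_le_prod
      · intro j _; positivity
      · intro j _
        rw [abs_mul, abs_mul, abs_pow, abs_pow, Nat.abs_cast]
        rw [mul_assoc]
        apply mul_le_mul_of_nonneg_left _ (by positivity)
        · apply mul_le_mul
          · exact pow_le_pow_left₀ (abs_nonneg _) (abs_coord_le z j) _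
          · exact pow_le_pow_left₀ (abs_nonneg _) (abs_coord_le y j) _
          · positivity
          · positivity
    have hchoose : (∏ j, ((α j).choose (β j) : ℝ)) ≤ 2 ^ m := by
      calc (∏ j, ((α j).choose (β j) : ℝ)) ≤ ∏ j, (2:ℝ) ^ (α j) := by
            apply Finset.prod_le_prod
            · intro j _; positivity
            · intro j _; exact_mod_cast nat_choose_le_two_pow (α j) (β j)
        _ = 2 ^ m := by rw [Finset.prod_pow_eq_pow_sum, hα]
    have hsum_sub : ∑ j, (α j - β j) = m - ∑ j, β j := by
      have : ∑ j, (α j - β j) + ∑ j, β j = ∑ j, α j := by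
        rw [← Finset.sum_add_distrib]
        apply Finset.sum_congr rfl; intro j _; exact Nat.sub_add_cancel (hβle j)
      omega
    have hone : ‖z‖ ^ (∑ j, β j) * ‖y‖ ^ (m - ∑ j, β j) ≤ T := by
      rw [hT]
      exact Finset.single_le_sum (f := fun i => ‖z‖ ^ i * ‖y‖ ^ (m - i))
        (fun i _ => by positivity) (Finset.mem_Icc.mpr ⟨hsum_ge, hsum_le⟩)
    calc |∏ j, ((α j).choose (β j) : ℝ) * z j ^ (β j) * y j ^ (α j - β j)|
        ≤ (∏ j, ((α j).choose (β j) : ℝ)) * (‖z‖ ^ (∑ j, β j) * ‖y‖ ^ (∑ j, (α j - β j))) := habs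
      _ ≤ 2 ^ m * T := by
          rw [hsum_sub]
          apply mul_le_mul hchoose hone (by positivity) (by positivity)
  have hcard : (S.erase 0).card ≤ 2 ^ m := by
    calc (S.erase 0).card ≤ S.card := Finset.card_erase_le
      _ = ∏ j, (α j + 1) := by rw [hS]; simp [Fintype.card_piFinset]
      _ ≤ ∏ j, 2 ^ (α j) := Finset.prod_le_prod' (fun j _ => (by have := Nat.lt_two_pow_self (n := α j); omega))
      _ = 2 ^ m := by rw [Finset.prod_pow_eq_pow_sum, hα]
  calc |∑ β ∈ S.erase 0, ∏ j, ((α j).choose (β j) : ℝ) * z j ^ (β j) * y j ^ (α j - β j)|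
      ≤ ∑ β ∈ S.erase 0, |∏ j, ((α j).choose (β j) : ℝ) * z j ^ (β j) * y j ^ (α j - β j)| :=
        Finset.abs_sum_le_sum_abs _ _
    _ ≤ ∑ _β ∈ S.erase 0, 2 ^ m * T := Finset.sum_le_sum hterm
    _ = (S.erase 0).card * (2 ^ m * T) := by rw [Finset.sum_const, nsmul_eq_mul]
    _ ≤ 2 ^ m * (2 ^ m * T) := by
        apply mul_le_mul_of_nonneg_right _ (by positivity)
        exact_mod_cast hcard
    _ = 4 ^ m * T := by ring_nf; rw [show (4:ℝ) = 2 * 2 by norm_num, mul_pow]; ring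

lemma heatKernel_nonneg {n : ℕ} (t : ℝ) (x : Rn n) (ht : 0 < t) : 0 ≤ heatKernel n t x := by
  unfold heatKernel; positivity

lemma heatKernel_continuous {n : ℕ} (t : ℝ) (ht : 0 < t) : Continuous (heatKernel n t) := by
  unfold heatKernel
  fun_prop

lemma heatKernel_le {n : ℕ} (t : ℝ) (ht : 0 < t) (x : Rn n) :
    heatKernel n t x ≤ (4 * π * t) ^ (-(n : ℝ) / 2) := by
  unfold heatKernel
  have h1 : Real.exp (-‖x‖ ^ 2 / (4 * t)) ≤ 1 := by
    apply Real.exp_le_one_iff.mpr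
    have h2 : (0:ℝ) ≤ ‖x‖^2 / (4*t) := by positivity
    rw [neg_div]; linarith
  nlinarith [Real.rpow_nonneg (by positivity : (0:ℝ) ≤ 4*π*t) (-(n:ℝ)/2), Real.exp_pos (-‖x‖ ^ 2 / (4 * t))]

lemma gauss_integrable {n : ℕ} {b : ℝ} (hb : 0 < b) :
    Integrable (fun v : Rn n => Real.exp (-b * ‖v‖^2)) (volume : Measure (Rn n)) := by
  have h := GaussianFourier.integrable_cexp_neg_mul_sq_norm_add (V := Rn n) (b := (b:ℂ))
    (by simpa using hb) 0 (0 : Rn n)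
  have heq : (fun v : Rn n => Complex.exp (-(b:ℂ) * (‖v‖:ℂ)^2 + 0 * (inner ℝ (0 : Rn n) v : ℝ))) =
      (fun v : Rn n => ((Real.exp (-b * ‖v‖^2) : ℝ) : ℂ)) := by
    funext v
    rw [zero_mul, add_zero, Complex.ofReal_exp]
    norm_cast
  rw [heq] at h
  refine h.re.congr (Eventually.of_forall fun v => ?_)
  exact RCLike.ofReal_re _

lemma gauss_integral_val {n : ℕ} {b : ℝ} (hb : 0 < b) :
    ∫ v : Rn n, Real.exp (-b * ‖v‖^2) = (π / b) ^ ((n:ℝ) / 2) := by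
  have := GaussianFourier.integral_rexp_neg_mul_sq_norm (V := Rn n) hb
  rw [this, finrank_euclideanSpace_fin]

lemma heatKernel_moment {n : ℕ} (i : ℕ) {t : ℝ} (ht : 0 < t) :
    ∫⁻ z : Rn n, ENNReal.ofReal (‖z‖ ^ i * heatKernel n t z) ≤
      ENNReal.ofReal ((9:ℝ) ^ i * (Nat.factorial i : ℝ) * 2 ^ ((n:ℝ)/2) * t ^ ((i:ℝ)/2)) := by
  set K : ℝ := (9:ℝ) ^ i * (Nat.factorial i : ℝ) * t ^ ((i:ℝ)/2) * (4 * π * t) ^ (-(n : ℝ) / 2)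
    with hK
  have hKnn : 0 ≤ K := by rw [hK]; positivity
  have hpt : ∀ z : Rn n, ‖z‖ ^ i * heatKernel n t z ≤ K * Real.exp (-(1/(8*t)) * ‖z‖^2) := by
    intro z
    set a := ‖z‖ with ha
    have hann : 0 ≤ a := norm_nonneg z
    set x0 := a^2/(8*t) with hx0
    have hx0nn : 0 ≤ x0 := by positivity
    have hsqrt : 0 ≤ Real.sqrt t := Real.sqrt_nonneg t
    have hsq : Real.sqrt t ^ 2 = t := Real.sq_sqrt ht.le
    have key1 : a ^ i ≤ (Real.sqrt t) ^ i * (1 + 8*x0) ^ i := by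
      rw [← mul_pow]
      apply pow_le_pow_left₀ hann
      have h8 : Real.sqrt t * (1 + 8*x0) = Real.sqrt t + a^2 / Real.sqrt t := by
        rw [hx0]
        field_simp
        linear_combination a^2*hsq
      rw [h8]
      rw [← sub_nonneg]
      have hsp : 0 < Real.sqrt t := Real.sqrt_pos.mpr ht
      have : Real.sqrt t + a ^ 2 / Real.sqrt t - a =
          (Real.sqrt t - a/2)^2 / Real.sqrt t + (3/4) * a^2 / Real.sqrt t := by
        field_simp
        ring
      rw [this]
      positivity
    have key2 : (1 + 8*x0) ^ i * Real.exp (-x0) ≤ 9 ^ i * (Nat.factorial i : ℝ) :=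
      poly_exp_le i hx0nn
    have hexp : Real.exp (-a^2/(4*t)) = Real.exp (-x0) * Real.exp (-x0) := by
      rw [← Real.exp_add, hx0]
      congr 1
      field_simp
      ring
    have hexp2 : Real.exp (-(1/(8*t)) * a^2) = Real.exp (-x0) := by
      congr 1
      rw [hx0]; field_simp
    have hrpow : (Real.sqrt t) ^ i = t ^ ((i:ℝ)/2) := by
      rw [Real.sqrt_eq_rpow, ← Real.rpow_natCast (t ^ ((1:ℝ)/2)) i, ← Real.rpow_mul ht.le]
      congr 1
      ring
    unfold heatKernel
    rw [← ha, hexp2]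
    have expand : a ^ i * ((4 * π * t) ^ (-(n : ℝ) / 2) * Real.exp (-a ^ 2 / (4 * t)))
        = (4 * π * t) ^ (-(n : ℝ) / 2) * (a ^ i * Real.exp (-a^2/(4*t))) := by ring
    rw [expand, hK, ← hrpow]
    have hC : (0:ℝ) ≤ (4 * π * t) ^ (-(n : ℝ) / 2) := by positivity
    have step : a ^ i * Real.exp (-a^2/(4*t)) ≤
        9 ^ i * (Nat.factorial i : ℝ) * Real.sqrt t ^ i * Real.exp (-x0) := by
      rw [hexp]
      calc a ^ i * (Real.exp (-x0) * Real.exp (-x0))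
          ≤ ((Real.sqrt t) ^ i * (1 + 8*x0) ^ i) * (Real.exp (-x0) * Real.exp (-x0)) := by
            apply mul_le_mul_of_nonneg_right key1 (by positivity)
        _ = (Real.sqrt t) ^ i * ((1 + 8*x0) ^ i * Real.exp (-x0)) * Real.exp (-x0) := by ring
        _ ≤ (Real.sqrt t) ^ i * (9 ^ i * (Nat.factorial i : ℝ)) * Real.exp (-x0) := by
            apply mul_le_mul_of_nonneg_right _ (Real.exp_pos _).le
            exact mul_le_mul_of_nonneg_left key2 (by positivity)
        _ = 9 ^ i * (Nat.factorial i : ℝ) * Real.sqrt t ^ i * Real.exp (-x0) := by ring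
    calc (4 * π * t) ^ (-(n : ℝ) / 2) * (a ^ i * Real.exp (-a^2/(4*t)))
        ≤ (4 * π * t) ^ (-(n : ℝ) / 2) *
          (9 ^ i * (Nat.factorial i : ℝ) * Real.sqrt t ^ i * Real.exp (-x0)) :=
          mul_le_mul_of_nonneg_left step hC
      _ = 9 ^ i * (Nat.factorial i : ℝ) * Real.sqrt t ^ i * (4 * π * t) ^ (-(n : ℝ) / 2) *
          Real.exp (-x0) := by ring
  have hb : (0:ℝ) < 1/(8*t) := by positivity
  calc ∫⁻ z : Rn n, ENNReal.ofReal (‖z‖ ^ i * heatKernel n t z)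
      ≤ ∫⁻ z : Rn n, ENNReal.ofReal (K * Real.exp (-(1/(8*t)) * ‖z‖^2)) := by
        apply lintegral_mono
        intro z
        exact ENNReal.ofReal_le_ofReal (hpt z)
    _ = ENNReal.ofReal K * ∫⁻ z : Rn n, ENNReal.ofReal (Real.exp (-(1/(8*t)) * ‖z‖^2)) := by
        simp_rw [ENNReal.ofReal_mul hKnn]
        rw [lintegral_const_mul' _ _ ENNReal.ofReal_ne_top]
    _ = ENNReal.ofReal K * ENNReal.ofReal (∫ z : Rn n, Real.exp (-(1/(8*t)) * ‖z‖^2)) := by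
        rw [ofReal_integral_eq_lintegral_ofReal (gauss_integrable hb)
          (Eventually.of_forall (fun z => (Real.exp_pos _).le))]
    _ ≤ ENNReal.ofReal ((9:ℝ) ^ i * (Nat.factorial i : ℝ) * 2 ^ ((n:ℝ)/2) * t ^ ((i:ℝ)/2)) := by
        rw [gauss_integral_val hb, ← ENNReal.ofReal_mul hKnn]
        apply ENNReal.ofReal_le_ofReal
        have hval : (π / (1/(8*t))) = 8 * π * t := by field_simp
        rw [hval, hK]
        apply le_of_eq
        have hcomb : (4 * π * t) ^ (-(n : ℝ) / 2) * (8 * π * t) ^ ((n:ℝ)/2) = 2 ^ ((n:ℝ)/2) := by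
          rw [neg_div, Real.rpow_neg (by positivity), inv_mul_eq_div,
            ← Real.div_rpow (by positivity) (by positivity)]
          congr 1
          field_simp
          ring
        calc (9:ℝ) ^ i * (Nat.factorial i : ℝ) * t ^ ((i:ℝ)/2) * (4 * π * t) ^ (-(n : ℝ) / 2) *
              (8 * π * t) ^ ((n:ℝ)/2)
            = (9:ℝ) ^ i * (Nat.factorial i : ℝ) * t ^ ((i:ℝ)/2) *
              ((4 * π * t) ^ (-(n : ℝ) / 2) * (8 * π * t) ^ ((n:ℝ)/2)) := by ring
          _ = (9:ℝ) ^ i * (Nat.factorial i : ℝ) * 2 ^ ((n:ℝ)/2) * t ^ ((i:ℝ)/2) := by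
              rw [hcomb]; ring

lemma sqrt_pow_eq_rpow {t : ℝ} (ht : 0 < t) (i : ℕ) :
    t ^ ((i:ℝ)/2) = (Real.sqrt t) ^ i := by
  rw [Real.sqrt_eq_rpow, ← Real.rpow_natCast (t ^ ((1:ℝ)/2)) i, ← Real.rpow_mul ht.le]
  congr 1
  ring

lemma young_rpow {t : ℝ} (ht : 0 < t) {c : ℝ} (hc : 0 ≤ c) {i m : ℕ}
    (h1 : 1 ≤ i) (him : i ≤ m) :
    t ^ ((i:ℝ)/2) * c ^ (m - i) ≤ t ^ ((1:ℝ)/2) * c ^ (m - 1) + t ^ ((m:ℝ)/2) := by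
  have hs := Real.sqrt_nonneg t
  have h := young_pow hs hc h1 him
  rw [sqrt_pow_eq_rpow ht i, sqrt_pow_eq_rpow ht m,
    show t ^ ((1:ℝ)/2) = Real.sqrt t by
      rw [Real.sqrt_eq_rpow]]
  simpa using h

end AuxLemmas


lemma per_alpha {n m : ℕ} (hm : 1 ≤ m) {t : ℝ} (ht : 0 < t) (φ : Rn n → ℝ)
    (hφ : Integrable φ (volume : Measure (Rn n))) (α : Fin n → ℕ) (hα : ∑ j, α j = m)
    (hφα : Integrable (fun y => mono n α y * φ y) (volume : Measure (Rn n))) :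
    eLpNorm (fun x => mono n α x * heatSG n t φ x
        - heatSG n t (fun y => mono n α y * φ y) x) 1 (volume : Measure (Rn n))
      ≤ ENNReal.ofReal ((m:ℝ) * 4^m * ((9:ℝ)^m * (Nat.factorial m : ℝ) * 2 ^ ((n:ℝ)/2))) *
        (ENNReal.ofReal (t ^ ((1:ℝ)/2)) *
            eLpNorm (fun x : Rn n => ‖x‖^(m-1) * φ x) 1 (volume : Measure (Rn n)) +
          ENNReal.ofReal (t ^ ((m:ℝ)/2)) * eLpNorm φ 1 (volume : Measure (Rn n))) := by

  have hφm : AEStronglyMeasurable φ (volume : Measure (Rn n)) := hφ.aestronglyMeasurable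
  have hcont : Continuous (heatKernel n t) := heatKernel_continuous t ht
  have hknn : ∀ z : Rn n, 0 ≤ heatKernel n t z := fun z => heatKernel_nonneg t z ht
  have hkle : ∀ z : Rn n, heatKernel n t z ≤ (4*π*t) ^ (-(n:ℝ)/2) := heatKernel_le t ht
  have hI1 : ∀ x : Rn n, Integrable (fun y => heatKernel n t (x - y) * φ y)
      (volume : Measure (Rn n)) := by
    intro x
    apply Integrable.mono' (hφ.norm.const_mul ((4*π*t) ^ (-(n:ℝ)/2)))
    · exact (hcont.comp (continuous_const.sub continuous_id)).aestronglyMeasurable.mul hφm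
    · refine Eventually.of_forall fun y => ?_
      rw [norm_mul, Real.norm_of_nonneg (hknn _)]
      exact mul_le_mul_of_nonneg_right (hkle _) (norm_nonneg _)
  have hI2 : ∀ x : Rn n, Integrable (fun y => heatKernel n t (x - y) * (mono n α y * φ y))
      (volume : Measure (Rn n)) := by
    intro x
    apply Integrable.mono' (hφα.norm.const_mul ((4*π*t) ^ (-(n:ℝ)/2)))
    · exact (hcont.comp (continuous_const.sub continuous_id)).aestronglyMeasurable.mul
        hφα.aestronglyMeasurable
    · refine Eventually.of_forall fun y => ?_
      rw [norm_mul, Real.norm_of_nonneg (hknn _)]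
      exact mul_le_mul_of_nonneg_right (hkle _) (norm_nonneg _)
  have hid : ∀ x : Rn n, mono n α x * heatSG n t φ x
      - heatSG n t (fun y => mono n α y * φ y) x
      = ∫ y : Rn n, heatKernel n t (x - y) * ((mono n α x - mono n α y) * φ y) := by
    intro x
    have h1 : heatSG n t φ x = ∫ y : Rn n, heatKernel n t (x-y) * φ y := by
      simp [heatSG, ht.ne']
    have h2 : heatSG n t (fun y => mono n α y * φ y) x
        = ∫ y : Rn n, heatKernel n t (x-y) * (mono n α y * φ y) := by
      simp [heatSG, ht.ne']
    rw [h1, h2]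
    rw [show (fun y => heatKernel n t (x - y) * ((mono n α x - mono n α y) * φ y))
        = fun y => (mono n α x) * (heatKernel n t (x-y) * φ y)
          - heatKernel n t (x-y) * (mono n α y * φ y) from funext fun y => by ring]
    rw [integral_sub ((hI1 x).const_mul _) (hI2 x), integral_const_mul]
  -- abbreviations
  set g : ℕ → Rn n → ℝ := fun i y => ‖y‖^(m-i) * |φ y| with hg
  set kf : ℕ → Rn n → ℝ := fun i z => ‖z‖^i * heatKernel n t z with hkf
  have hgnn : ∀ i y, 0 ≤ g i y := fun i y => by rw [hg]; positivity
  have hkfnn : ∀ i z, 0 ≤ kf i z := fun i z => by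
    rw [hkf]; exact mul_nonneg (by positivity) (hknn z)
  have hkfcont : ∀ i, Continuous (kf i) := fun i => (continuous_norm.pow i).mul hcont
  have hgae : ∀ i, AEMeasurable (g i) (volume : Measure (Rn n)) := fun i =>
    ((continuous_norm.pow (m-i)).aemeasurable.mul (measurable_abs.comp_aemeasurable hφm.aemeasurable))
  have hprod : ∀ i : ℕ, AEMeasurable
      (fun p : Rn n × Rn n => ENNReal.ofReal ((4:ℝ)^m * (kf i (p.1 - p.2) * g i p.2)))
      ((volume : Measure (Rn n)).prod (volume : Measure (Rn n))) := by
    intro i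
    apply ENNReal.measurable_ofReal.comp_aemeasurable
    apply AEMeasurable.const_mul
    apply AEMeasurable.mul
    · exact ((hkfcont i).comp (continuous_fst.sub continuous_snd)).aemeasurable
    · exact (hgae i).comp_quasiMeasurePreserving MeasureTheory.Measure.quasiMeasurePreserving_snd
  have hyae : ∀ (i : ℕ) (x : Rn n), AEMeasurable
      (fun y => ENNReal.ofReal ((4:ℝ)^m * (kf i (x - y) * g i y))) (volume : Measure (Rn n)) := by
    intro i x
    apply ENNReal.measurable_ofReal.comp_aemeasurable
    apply AEMeasurable.const_mul
    exact (((hkfcont i).comp (continuous_const.sub continuous_id)).aemeasurable).mul (hgae i)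
  set A := eLpNorm (fun x : Rn n => ‖x‖^(m-1) * φ x) 1 (volume : Measure (Rn n)) with hA
  set B := eLpNorm φ 1 (volume : Measure (Rn n)) with hB
  have hAeq : A = ∫⁻ y : Rn n, ENNReal.ofReal (g 1 y) := by
    rw [hA, eLpNorm_one_eq_lintegral_enorm]
    apply lintegral_congr
    intro y
    rw [Real.enorm_eq_ofReal_abs, hg]
    congr 1
    rw [abs_mul, abs_pow, abs_norm]
  have hBeq : B = ∫⁻ y : Rn n, ENNReal.ofReal |φ y| := by
    rw [hB, eLpNorm_one_eq_lintegral_enorm]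
    apply lintegral_congr
    intro y
    rw [Real.enorm_eq_ofReal_abs]
  -- moment bound
  set Ki : ℕ → ℝ≥0∞ := fun i => ∫⁻ z : Rn n, ENNReal.ofReal (kf i z) with hKi
  have hKile : ∀ i, Ki i ≤
      ENNReal.ofReal ((9:ℝ) ^ i * (Nat.factorial i : ℝ) * 2 ^ ((n:ℝ)/2) * t ^ ((i:ℝ)/2)) :=
    fun i => heatKernel_moment i ht
  have hKint : ∀ i, Ki i ≠ ⊤ := fun i => ((hKile i).trans_lt ENNReal.ofReal_lt_top).ne
  -- main chain
  calc eLpNorm (fun x => mono n α x * heatSG n t φ x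
        - heatSG n t (fun y => mono n α y * φ y) x) 1 (volume : Measure (Rn n))
      = ∫⁻ x : Rn n, ENNReal.ofReal
          |∫ y : Rn n, heatKernel n t (x - y) * ((mono n α x - mono n α y) * φ y)| := by
        rw [eLpNorm_one_eq_lintegral_enorm]
        apply lintegral_congr
        intro x
        rw [Real.enorm_eq_ofReal_abs, hid x]
    _ ≤ ∫⁻ x : Rn n, ∫⁻ y : Rn n,
          ∑ i ∈ Finset.Icc 1 m, ENNReal.ofReal ((4:ℝ)^m * (kf i (x-y) * g i y)) := by
        apply lintegral_mono
        intro x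
        calc ENNReal.ofReal |∫ y : Rn n, heatKernel n t (x - y) * ((mono n α x - mono n α y) * φ y)|
            ≤ ∫⁻ y : Rn n, ‖heatKernel n t (x - y) * ((mono n α x - mono n α y) * φ y)‖ₑ := by
              rw [← Real.enorm_eq_ofReal_abs]
              exact enorm_integral_le_lintegral_enorm _
          _ ≤ ∫⁻ y : Rn n, ∑ i ∈ Finset.Icc 1 m,
                ENNReal.ofReal ((4:ℝ)^m * (kf i (x-y) * g i y)) := by
              apply lintegral_mono
              intro y
              dsimp only
              rw [Real.enorm_eq_ofReal_abs,
                ← ENNReal.ofReal_sum_of_nonneg (fun i _ => by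
                  have := hkfnn i (x-y); have := hgnn i y; positivity)]
              apply ENNReal.ofReal_le_ofReal
              have hd := mono_diff α hα x y
              calc |heatKernel n t (x - y) * ((mono n α x - mono n α y) * φ y)|
                  = heatKernel n t (x - y) * |mono n α x - mono n α y| * |φ y| := by
                    rw [abs_mul, abs_mul, abs_of_nonneg (hknn _), ← mul_assoc]
                _ ≤ heatKernel n t (x - y) *
                      (4 ^ m * ∑ i ∈ Finset.Icc 1 m, ‖x - y‖ ^ i * ‖y‖ ^ (m - i)) * |φ y| := by
                    apply mul_le_mul_of_nonneg_right _ (abs_nonneg _)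
                    exact mul_le_mul_of_nonneg_left hd (hknn _)
                _ = ∑ i ∈ Finset.Icc 1 m, (4:ℝ)^m * (kf i (x-y) * g i y) := by
                    simp only [hkf, hg, Finset.mul_sum, Finset.sum_mul]
                    apply Finset.sum_congr rfl
                    intro i _
                    ring
    _ = ∑ i ∈ Finset.Icc 1 m, ∫⁻ p : Rn n × Rn n,
          ENNReal.ofReal ((4:ℝ)^m * (kf i (p.1-p.2) * g i p.2))
          ∂((volume : Measure (Rn n)).prod (volume : Measure (Rn n))) := by
        rw [lintegral_lintegral (f := fun x y => ∑ i ∈ Finset.Icc 1 m,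
          ENNReal.ofReal ((4:ℝ)^m * (kf i (x-y) * g i y)))
          (Finset.aemeasurable_fun_sum _ (fun i _ => hprod i))]
        exact lintegral_finset_sum' _ (fun i _ => hprod i)
    _ ≤ ∑ _i ∈ Finset.Icc 1 m, ENNReal.ofReal ((4:ℝ)^m *
          ((9:ℝ)^m * (Nat.factorial m : ℝ) * 2 ^ ((n:ℝ)/2))) *
          (ENNReal.ofReal (t ^ ((1:ℝ)/2)) * A + ENNReal.ofReal (t ^ ((m:ℝ)/2)) * B) := by
        apply Finset.sum_le_sum
        intro i hi
        obtain ⟨hi1, him⟩ := Finset.mem_Icc.mp hi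
        calc ∫⁻ p : Rn n × Rn n, ENNReal.ofReal ((4:ℝ)^m * (kf i (p.1-p.2) * g i p.2))
              ∂((volume : Measure (Rn n)).prod (volume : Measure (Rn n)))
            = ∫⁻ y : Rn n, ∫⁻ x : Rn n, ENNReal.ofReal ((4:ℝ)^m * (kf i (x-y) * g i y)) :=
              lintegral_prod_symm _ (hprod i)
          _ = ∫⁻ y : Rn n, (ENNReal.ofReal ((4:ℝ)^m) * Ki i) * ENNReal.ofReal (g i y) := by
              apply lintegral_congr
              intro y
              calc ∫⁻ x : Rn n, ENNReal.ofReal ((4:ℝ)^m * (kf i (x-y) * g i y))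
                  = ∫⁻ x : Rn n, (ENNReal.ofReal ((4:ℝ)^m) * ENNReal.ofReal (g i y)) *
                      ENNReal.ofReal (kf i (x-y)) := by
                    apply lintegral_congr
                    intro x
                    rw [ENNReal.ofReal_mul (by positivity), ENNReal.ofReal_mul (hkfnn i _)]
                    ring
                _ = (ENNReal.ofReal ((4:ℝ)^m) * ENNReal.ofReal (g i y)) *
                      ∫⁻ x : Rn n, ENNReal.ofReal (kf i (x-y)) :=
                    lintegral_const_mul' _ _ (by
                      exact ENNReal.mul_ne_top ENNReal.ofReal_ne_top ENNReal.ofReal_ne_top)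
                _ = (ENNReal.ofReal ((4:ℝ)^m) * Ki i) * ENNReal.ofReal (g i y) := by
                    rw [lintegral_sub_right_eq_self (fun z => ENNReal.ofReal (kf i z)) y]
                    simp only [hKi]
                    ring
          _ = (ENNReal.ofReal ((4:ℝ)^m) * Ki i) * ∫⁻ y : Rn n, ENNReal.ofReal (g i y) :=
              lintegral_const_mul' _ _ (ENNReal.mul_ne_top ENNReal.ofReal_ne_top (hKint i))
          _ ≤ (ENNReal.ofReal ((4:ℝ)^m) *
                (ENNReal.ofReal ((9:ℝ)^m * (Nat.factorial m : ℝ) * 2 ^ ((n:ℝ)/2)) *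
                  ENNReal.ofReal (t ^ ((i:ℝ)/2)))) * ∫⁻ y : Rn n, ENNReal.ofReal (g i y) := by
              apply mul_le_mul_left
              apply mul_le_mul_right
              calc Ki i ≤ ENNReal.ofReal ((9:ℝ) ^ i * (Nat.factorial i : ℝ) * 2 ^ ((n:ℝ)/2)
                    * t ^ ((i:ℝ)/2)) := hKile i
                _ ≤ _ := by
                    rw [← ENNReal.ofReal_mul (by positivity)]
                    apply ENNReal.ofReal_le_ofReal
                    apply mul_le_mul_of_nonneg_right _ (by positivity)
                    apply mul_le_mul_of_nonneg_right _ (by positivity)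
                    apply mul_le_mul
                    · exact pow_le_pow_right₀ (by norm_num) him
                    · exact_mod_cast Nat.factorial_le him
                    · positivity
                    · positivity
          _ ≤ ENNReal.ofReal ((4:ℝ)^m * ((9:ℝ)^m * (Nat.factorial m : ℝ) * 2 ^ ((n:ℝ)/2))) *
                (ENNReal.ofReal (t ^ ((1:ℝ)/2)) * A + ENNReal.ofReal (t ^ ((m:ℝ)/2)) * B) := by
              have hX : ENNReal.ofReal (t ^ ((i:ℝ)/2)) * ∫⁻ y : Rn n, ENNReal.ofReal (g i y)
                  ≤ ENNReal.ofReal (t ^ ((1:ℝ)/2)) * A + ENNReal.ofReal (t ^ ((m:ℝ)/2)) * B := by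
                calc ENNReal.ofReal (t ^ ((i:ℝ)/2)) * ∫⁻ y : Rn n, ENNReal.ofReal (g i y)
                    = ∫⁻ y : Rn n, ENNReal.ofReal (t ^ ((i:ℝ)/2) * g i y) := by
                      rw [← lintegral_const_mul' _ _ ENNReal.ofReal_ne_top]
                      apply lintegral_congr
                      intro y
                      rw [← ENNReal.ofReal_mul (by positivity : (0:ℝ) ≤ t ^ ((i:ℝ)/2))]
                  _ ≤ ∫⁻ y : Rn n, (ENNReal.ofReal (t ^ ((1:ℝ)/2) * g 1 y)
                        + ENNReal.ofReal (t ^ ((m:ℝ)/2) * |φ y|)) := by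
                      apply lintegral_mono
                      intro y
                      dsimp only
                      rw [← ENNReal.ofReal_add (by positivity) (by positivity)]
                      apply ENNReal.ofReal_le_ofReal
                      have hy := young_rpow ht (norm_nonneg y) hi1 him
                      calc t ^ ((i:ℝ)/2) * g i y
                          = (t ^ ((i:ℝ)/2) * ‖y‖^(m-i)) * |φ y| := by simp only [hg]; ring
                        _ ≤ (t ^ ((1:ℝ)/2) * ‖y‖^(m-1) + t ^ ((m:ℝ)/2)) * |φ y| :=
                            mul_le_mul_of_nonneg_right hy (abs_nonneg _)
                        _ = t ^ ((1:ℝ)/2) * g 1 y + t ^ ((m:ℝ)/2) * |φ y| := by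
                            simp only [hg]; ring
                  _ ≤ ENNReal.ofReal (t ^ ((1:ℝ)/2)) * A + ENNReal.ofReal (t ^ ((m:ℝ)/2)) * B := by
                      rw [lintegral_add_left']
                      · apply add_le_add
                        · apply le_of_eq
                          rw [hAeq, ← lintegral_const_mul' _ _ ENNReal.ofReal_ne_top]
                          apply lintegral_congr
                          intro y
                          rw [← ENNReal.ofReal_mul (by positivity : (0:ℝ) ≤ t ^ ((1:ℝ)/2))]
                        · apply le_of_eq
                          rw [hBeq, ← lintegral_const_mul' _ _ ENNReal.ofReal_ne_top]
                          apply lintegral_congr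
                          intro y
                          rw [← ENNReal.ofReal_mul (by positivity : (0:ℝ) ≤ t ^ ((m:ℝ)/2))]
                      · apply ENNReal.measurable_ofReal.comp_aemeasurable
                        exact (hgae 1).const_mul _
              calc (ENNReal.ofReal ((4:ℝ)^m) *
                    (ENNReal.ofReal ((9:ℝ)^m * (Nat.factorial m : ℝ) * 2 ^ ((n:ℝ)/2)) *
                      ENNReal.ofReal (t ^ ((i:ℝ)/2)))) * ∫⁻ y : Rn n, ENNReal.ofReal (g i y)
                  = (ENNReal.ofReal ((4:ℝ)^m) *
                      ENNReal.ofReal ((9:ℝ)^m * (Nat.factorial m : ℝ) * 2 ^ ((n:ℝ)/2))) *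
                    (ENNReal.ofReal (t ^ ((i:ℝ)/2)) * ∫⁻ y : Rn n, ENNReal.ofReal (g i y)) := by
                    ring
                _ ≤ (ENNReal.ofReal ((4:ℝ)^m) *
                      ENNReal.ofReal ((9:ℝ)^m * (Nat.factorial m : ℝ) * 2 ^ ((n:ℝ)/2))) *
                    (ENNReal.ofReal (t ^ ((1:ℝ)/2)) * A + ENNReal.ofReal (t ^ ((m:ℝ)/2)) * B) :=
                    mul_le_mul_right hX _
                _ = _ := by rw [← ENNReal.ofReal_mul (by positivity)]
    _ ≤ ENNReal.ofReal ((m:ℝ) * 4^m * ((9:ℝ)^m * (Nat.factorial m : ℝ) * 2 ^ ((n:ℝ)/2))) *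
          (ENNReal.ofReal (t ^ ((1:ℝ)/2)) * A + ENNReal.ofReal (t ^ ((m:ℝ)/2)) * B) := by
        rw [Finset.sum_const, Nat.card_Icc, Nat.add_sub_cancel, nsmul_eq_mul, ← mul_assoc]
        apply mul_le_mul_left
        apply le_of_eq
        rw [mul_assoc ((m:ℝ)) ((4:ℝ)^m)
            ((9:ℝ)^m * (Nat.factorial m : ℝ) * 2 ^ ((n:ℝ)/2)),
          ENNReal.ofReal_mul (Nat.cast_nonneg m), ENNReal.ofReal_natCast]

end Aux

/-- Theorem 2.6: commutator estimate
`Σ_{|α|=m} ‖x^α e^{tΔ}φ − e^{tΔ}(x^α φ)‖₁ ≤ C_m { t^{1/2} ‖|x|^{m−1}φ‖₁ + (t^{1/2}+t^{m/2}) ‖φ‖₁ }`. -/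
theorem stmt11 (n : ℕ) (hn : 1 ≤ n) (m : ℕ) (hm : 1 ≤ m) :
    ∃ C : ℝ, 0 < C ∧ ∀ φ : Rn n → ℝ, MemL1m n m φ → ∀ t : ℝ, 0 < t →
      ∑ α ∈ Finset.Nat.antidiagonalTuple n m,
          eLpNorm
            (fun x => mono n α x * heatSG n t φ x - heatSG n t (fun y => mono n α y * φ y) x)
            1 (volume : Measure (Rn n)) ≤
        ENNReal.ofReal C *
          (ENNReal.ofReal (t ^ ((1 : ℝ) / 2)) *
              eLpNorm (fun x : Rn n => ‖x‖ ^ (m - 1) * φ x) 1 (volume : Measure (Rn n)) +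
            ENNReal.ofReal (t ^ ((1 : ℝ) / 2) + t ^ ((m : ℝ) / 2)) *
              eLpNorm φ 1 (volume : Measure (Rn n))) := by
    classical
  set Cm' : ℝ := (m:ℝ) * 4^m * ((9:ℝ)^m * (Nat.factorial m : ℝ) * 2 ^ ((n:ℝ)/2)) with hCm'
  have hCm'nn : 0 ≤ Cm' := by rw [hCm']; positivity
  set N : ℕ := (Finset.Nat.antidiagonalTuple n m).card with hN
  refine ⟨(N : ℝ) * Cm' + 1, by positivity, ?_⟩
  intro φ hφL t ht
  have hφ : Integrable φ (volume : Measure (Rn n)) := by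
    have h := hφL 0 (by simp)
    rw [memLp_one_iff_integrable] at h
    simpa [mono] using h
  set A := eLpNorm (fun x : Rn n => ‖x‖^(m-1) * φ x) 1 (volume : Measure (Rn n)) with hA
  set B := eLpNorm φ 1 (volume : Measure (Rn n)) with hB
  set R : ℝ≥0∞ := ENNReal.ofReal (t ^ ((1:ℝ)/2)) * A + ENNReal.ofReal (t ^ ((m:ℝ)/2)) * B
    with hR
  have key : ∀ α ∈ Finset.Nat.antidiagonalTuple n m,
      eLpNorm (fun x => mono n α x * heatSG n t φ x
        - heatSG n t (fun y => mono n α y * φ y) x) 1 (volume : Measure (Rn n))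
      ≤ ENNReal.ofReal Cm' * R := by
    intro α hα
    have hαs : ∑ j, α j = m := Finset.Nat.mem_antidiagonalTuple.mp hα
    have hφα : Integrable (fun y => mono n α y * φ y) (volume : Measure (Rn n)) := by
      have h := hφL α (le_of_eq hαs)
      rwa [memLp_one_iff_integrable] at h
    exact per_alpha hm ht φ hφ α hαs hφα
  calc ∑ α ∈ Finset.Nat.antidiagonalTuple n m,
        eLpNorm (fun x => mono n α x * heatSG n t φ x
          - heatSG n t (fun y => mono n α y * φ y) x) 1 (volume : Measure (Rn n))
      ≤ ∑ _α ∈ Finset.Nat.antidiagonalTuple n m, ENNReal.ofReal Cm' * R :=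
        Finset.sum_le_sum key
    _ = (N : ℝ≥0∞) * (ENNReal.ofReal Cm' * R) := by
        rw [Finset.sum_const, nsmul_eq_mul, hN]
    _ = ENNReal.ofReal ((N:ℝ) * Cm') * R := by
        rw [ENNReal.ofReal_mul (Nat.cast_nonneg N), ENNReal.ofReal_natCast, mul_assoc]
    _ ≤ ENNReal.ofReal ((N:ℝ) * Cm' + 1) * R := by
        apply mul_le_mul_left
        apply ENNReal.ofReal_le_ofReal
        linarith
    _ ≤ ENNReal.ofReal ((N:ℝ) * Cm' + 1) *
          (ENNReal.ofReal (t ^ ((1 : ℝ) / 2)) * A +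
            ENNReal.ofReal (t ^ ((1 : ℝ) / 2) + t ^ ((m : ℝ) / 2)) * B) := by
        apply mul_le_mul_right
        rw [hR]
        apply add_le_add_right
        apply mul_le_mul_left
        apply ENNReal.ofReal_le_ofReal
        have : (0:ℝ) ≤ t ^ ((1:ℝ)/2) := by positivity
        linarith
end

section
/- Let n ≥ 1, let φ ∈ L¹(ℝⁿ), and let q ∈ [1,∞]. Set c₀ = ∫_{ℝⁿ} φ(y) dy. Then lim_{t → ∞} t^{(n/2)(1−1/q)} ‖e^{tΔ}φ‖_q = |c₀| ‖G₁‖_q, where ‖G₁‖_q = (4π)^{−(n/2)(1−1/q)} q^{−n/(2q)} for 1 ≤ q < ∞ and ‖G₁‖_∞ = (4π)^{−n/2}. -/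
open MeasureTheory Real Filter
open scoped ENNReal Topology NNReal

noncomputable section

namespace S17
variable {n : ℕ}

def cg (n : ℕ) : ℝ := (4 * π) ^ (-(n : ℝ) / 2)

lemma cg_pos : 0 < cg n := rpow_pos_of_pos (by positivity) _

lemma gaussOne_eq (x : Rn n) : gaussOne n x = cg n * rexp (-‖x‖ ^ 2 / 4) := by
  simp [gaussOne, heatKernel, cg]

lemma gauss_pos (x : Rn n) : 0 < gaussOne n x := by
  rw [gaussOne_eq]; exact mul_pos cg_pos (exp_pos _)

lemma gauss_le (x : Rn n) : gaussOne n x ≤ cg n := by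
  rw [gaussOne_eq]
  have h1 : rexp (-‖x‖ ^ 2 / 4) ≤ 1 := exp_le_one_iff.2 (by nlinarith [sq_nonneg ‖x‖])
  nlinarith [cg_pos (n := n), exp_pos (-‖x‖^2/4)]

lemma cont_gauss : Continuous (gaussOne n) := by
  have : Continuous fun x : Rn n => cg n * rexp (-‖x‖ ^ 2 / 4) := by fun_prop
  simpa [funext gaussOne_eq] using this

lemma integrable_gauss {b : ℝ} (hb : 0 < b) :
    Integrable (fun x : Rn n => rexp (-b * ‖x‖ ^ 2)) := by
  have h := (GaussianFourier.integrable_cexp_neg_mul_sq_norm_add (V := Rn n)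
    (b := (b : ℂ)) (by simpa using hb) 0 (0 : Rn n)).norm
  refine h.congr (Eventually.of_forall fun x => ?_)
  simp [Complex.norm_exp]
  exact Or.inl (by norm_cast)


lemma gauss_norm_eq (x : Rn n) : gaussOne n x = cg n * rexp (-‖x‖ ^ 2 / 4) := gaussOne_eq x

lemma abs_mul_exp_le (s : ℝ) : |s| * rexp (-s ^ 2 / 4) ≤ 1 := by
  have h1 : |s| ≤ rexp (s ^ 2 / 4) := by
    have h2 : s ^ 2 / 4 + 1 ≤ rexp (s ^ 2 / 4) := Real.add_one_le_exp _
    nlinarith [sq_nonneg (|s| - 2), sq_abs s]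
  calc |s| * rexp (-s ^ 2 / 4) ≤ rexp (s ^ 2 / 4) * rexp (-s ^ 2 / 4) :=
        mul_le_mul_of_nonneg_right h1 (exp_pos _).le
    _ = 1 := by rw [← exp_add]; ring_nf; exact exp_zero

lemma oneDim_lip : LipschitzWith (cg n / 2).toNNReal (fun s : ℝ => cg n * rexp (-s ^ 2 / 4)) := by
  apply lipschitzWith_of_nnnorm_deriv_le
  · fun_prop
  · intro s
    have hd : HasDerivAt (fun s : ℝ => cg n * rexp (-s ^ 2 / 4))
        (cg n * (rexp (-s ^ 2 / 4) * (-(2 * s ^ 1) / 4))) s := by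
      have h1 : HasDerivAt (fun s : ℝ => -s ^ 2 / 4) (-(2 * s ^ 1) / 4) s := by
        simpa using ((hasDerivAt_pow 2 s).neg.div_const 4)
      exact (h1.exp).const_mul (cg n)
    rw [hd.deriv, ← NNReal.coe_le_coe, coe_nnnorm,
      Real.coe_toNNReal _ (div_nonneg cg_pos.le (by norm_num))]
    have h2 : |s| * rexp (-s ^ 2 / 4) ≤ 1 := abs_mul_exp_le s
    have h3 : (0:ℝ) < cg n := cg_pos
    rw [Real.norm_eq_abs]
    rw [abs_mul, abs_of_pos h3, abs_mul, abs_of_pos (exp_pos _)]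
    have : |(-(2 * s ^ 1) / 4)| = |s| / 2 := by
      rw [abs_div, abs_neg, abs_mul]; simp [abs_of_nonneg]; ring
    rw [this]
    calc cg n * (rexp (-s ^ 2 / 4) * (|s| / 2))
        = cg n / 2 * (|s| * rexp (-s ^ 2 / 4)) := by ring
      _ ≤ cg n / 2 * 1 := by
          exact mul_le_mul_of_nonneg_left h2 (by positivity)
      _ = cg n / 2 := mul_one _

lemma gauss_lip (u v : Rn n) : |gaussOne n u - gaussOne n v| ≤ cg n / 2 * ‖u - v‖ := by
  have h := (oneDim_lip (n := n)).dist_le_mul ‖u‖ ‖v‖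
  rw [Real.dist_eq, Real.dist_eq, Real.coe_toNNReal _ (div_nonneg cg_pos.le (by norm_num))] at h
  rw [gaussOne_eq, gaussOne_eq]
  refine h.trans ?_
  have := abs_norm_sub_norm_le u v
  have h3 : (0:ℝ) < cg n := cg_pos
  nlinarith

def Ed (n : ℕ) (x : Rn n) : ℝ := cg n * rexp (1 / 2) * rexp (-‖x‖ ^ 2 / 8)

lemma gauss_dom {x h : Rn n} (hh : ‖h‖ ≤ 1) : gaussOne n (x - h) ≤ Ed n x := by
  rw [gaussOne_eq, Ed, mul_assoc, ← Real.exp_add]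
  refine mul_le_mul_of_nonneg_left (exp_le_exp.2 ?_) cg_pos.le
  have h1 : ‖x‖ ≤ ‖x - h‖ + 1 := by
    have := norm_sub_norm_le x h
    have := norm_sub_le x h
    calc ‖x‖ = ‖(x - h) + h‖ := by rw [sub_add_cancel]
      _ ≤ ‖x - h‖ + ‖h‖ := norm_add_le _ _
      _ ≤ ‖x - h‖ + 1 := by linarith
  nlinarith [norm_nonneg (x - h), norm_nonneg x,
    mul_self_le_mul_self (norm_nonneg x) h1, sq_nonneg (‖x - h‖ - 1), sq_abs ‖x‖]

lemma gauss_le_Ed (x : Rn n) : gaussOne n x ≤ Ed n x := by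
  have := gauss_dom (x := x) (h := (0 : Rn n)) (by simp)
  simpa using this

lemma integrable_Ed : Integrable (Ed n) := by
  have h := (integrable_gauss (n := n) (by norm_num : (0:ℝ) < 1/8)).const_mul
    (cg n * rexp (1/2))
  refine h.congr (Eventually.of_forall fun x => ?_)
  rw [Ed]; ring_nf

lemma Ed_pos (x : Rn n) : 0 < Ed n x :=
  mul_pos (mul_pos cg_pos (exp_pos _)) (exp_pos _)

lemma integrable_gaussOne : Integrable (gaussOne n) := by
  have h := (integrable_gauss (n := n) (by norm_num : (0:ℝ) < 1/4)).const_mul (cg n)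
  refine h.congr (Eventually.of_forall fun x => ?_)
  rw [gaussOne_eq]; ring_nf

def Jl (n : ℕ) (h : Rn n) : ℝ≥0∞ := ∫⁻ x, (‖gaussOne n (x - h) - gaussOne n x‖₊ : ℝ≥0∞)

lemma measurable_Jl : Measurable (Jl n) := by
  apply Measurable.lintegral_prod_right' (f := fun p : Rn n × Rn n =>
    (‖gaussOne n (p.2 - p.1) - gaussOne n p.2‖₊ : ℝ≥0∞))
  exact (((cont_gauss.comp (continuous_snd.sub continuous_fst)).sub
    (cont_gauss.comp continuous_snd)).measurable).enorm

def IG (n : ℕ) : ℝ≥0∞ := ∫⁻ x, (‖gaussOne n x‖₊ : ℝ≥0∞)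

lemma IG_lt_top : IG n < ⊤ := integrable_gaussOne.2

lemma Jl_le (h : Rn n) : Jl n h ≤ 2 * IG n := by
  have h1 : Jl n h ≤ ∫⁻ x, ((‖gaussOne n (x - h)‖₊ : ℝ≥0∞) + ‖gaussOne n x‖₊) := by
    refine lintegral_mono fun x => ?_
    calc (‖gaussOne n (x - h) - gaussOne n x‖₊ : ℝ≥0∞)
        ≤ ((‖gaussOne n (x - h)‖₊ + ‖gaussOne n x‖₊ : ℝ≥0) : ℝ≥0∞) :=
          ENNReal.coe_le_coe.2 (nnnorm_sub_le _ _)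
      _ = _ := ENNReal.coe_add _ _
  have hm1 : Measurable fun x : Rn n => (‖gaussOne n (x - h)‖₊ : ℝ≥0∞) :=
    ((cont_gauss.comp (continuous_id.sub continuous_const)).measurable).enorm
  have hm2 : Measurable fun x : Rn n => (‖gaussOne n x‖₊ : ℝ≥0∞) :=
    (cont_gauss.measurable).enorm
  rw [lintegral_add_left hm1] at h1
  have h2 : (∫⁻ x, (‖gaussOne n (x - h)‖₊ : ℝ≥0∞)) = IG n := by
    simp_rw [sub_eq_add_neg]
    exact lintegral_add_right_eq_self (μ := (volume : Measure (Rn n)))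
      (fun x => (‖gaussOne n x‖₊ : ℝ≥0∞)) (-h)
  rw [h2] at h1
  calc Jl n h ≤ IG n + IG n := h1
    _ = 2 * IG n := (two_mul _).symm

lemma tendsto_Jl : Tendsto (Jl n) (𝓝 0) (𝓝 0) := by
  have key := tendsto_lintegral_filter_of_dominated_convergence
    (μ := (volume : Measure (Rn n)))
    (l := 𝓝 (0 : Rn n))
    (F := fun h x => (‖gaussOne n (x - h) - gaussOne n x‖₊ : ℝ≥0∞))
    (f := fun _ => 0)
    (bound := fun x => ENNReal.ofReal (2 * Ed n x))
    (hF_meas := Eventually.of_forall fun h =>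
      (((cont_gauss.comp (continuous_id.sub continuous_const)).sub
        cont_gauss).measurable).enorm)
    ?_ ?_ ?_
  · convert key using 2 <;> simp [Jl]
  · have hball : ∀ᶠ h : Rn n in 𝓝 0, ‖h‖ ≤ 1 := by
      filter_upwards [Metric.closedBall_mem_nhds (0 : Rn n) one_pos] with h hh
      simpa [mem_closedBall_zero_iff] using hh
    filter_upwards [hball] with h hh
    refine Eventually.of_forall fun x => ?_
    rw [← enorm_eq_nnnorm, Real.enorm_eq_ofReal_abs]
    refine ENNReal.ofReal_le_ofReal ?_
    have h1 := gauss_dom (x := x) hh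
    have h2 := gauss_le_Ed (n := n) x
    have h3 := gauss_pos (n := n) (x - h)
    have h4 := gauss_pos (n := n) x
    rw [abs_sub_le_iff]; constructor <;> nlinarith
  · have hint : Integrable (fun x => 2 * Ed n x) := integrable_Ed.const_mul 2
    have : (∫⁻ x, ENNReal.ofReal (2 * Ed n x)) = ∫⁻ x, (‖2 * Ed n x‖₊ : ℝ≥0∞) := by
      refine lintegral_congr fun x => ?_
      rw [← enorm_eq_nnnorm, Real.enorm_eq_ofReal_abs, abs_of_pos (by nlinarith [Ed_pos (n := n) x])]
    rw [this]
    exact hint.2.ne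
  · refine Eventually.of_forall fun x => ?_
    have tcont : Continuous fun h : Rn n =>
        (‖gaussOne n (x - h) - gaussOne n x‖₊ : ℝ≥0∞) :=
      ENNReal.continuous_coe.comp (((cont_gauss.comp
        (continuous_const.sub continuous_id)).sub continuous_const).nnnorm)
    have := tcont.tendsto 0
    simpa using this


def Fc (n : ℕ) (ε : ℝ) (φ : Rn n → ℝ) (x : Rn n) : ℝ :=
  ∫ y, gaussOne n (x - ε • y) * φ y

variable {φ : Rn n → ℝ} {ε : ℝ}

lemma prod_sm (hφm : StronglyMeasurable φ) (ε : ℝ) :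
    StronglyMeasurable (fun p : Rn n × Rn n => gaussOne n (p.1 - ε • p.2) * φ p.2) := by
  have h1 : Continuous fun p : Rn n × Rn n => gaussOne n (p.1 - ε • p.2) :=
    cont_gauss.comp (continuous_fst.sub (continuous_snd.const_smul ε))
  exact h1.stronglyMeasurable.mul (hφm.comp_measurable measurable_snd)

lemma Fc_sm (hφm : StronglyMeasurable φ) (ε : ℝ) : StronglyMeasurable (Fc n ε φ) :=
  (prod_sm hφm ε).integral_prod_right'

lemma slice_integrable (hφi : Integrable φ) (ε : ℝ) (x : Rn n) :
    Integrable (fun y => gaussOne n (x - ε • y) * φ y) := by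
  refine hφi.bdd_mul (c := cg n) ?_ (Eventually.of_forall fun y => ?_)
  · exact (cont_gauss.comp (continuous_const.sub (continuous_id.const_smul ε))).aestronglyMeasurable
  · rw [Real.norm_eq_abs, abs_of_pos (gauss_pos _)]; exact gauss_le _

lemma diff_eq (hφi : Integrable φ) (ε : ℝ) (x : Rn n) :
    Fc n ε φ x - (∫ y, φ y) * gaussOne n x =
      ∫ y, (gaussOne n (x - ε • y) - gaussOne n x) * φ y := by
  have h1 := slice_integrable (n := n) hφi ε x
  have h2 : Integrable (fun y => gaussOne n x * φ y) := hφi.const_mul _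
  have h3 : (∫ y, (gaussOne n (x - ε • y) - gaussOne n x) * φ y) =
      ∫ y, (gaussOne n (x - ε • y) * φ y - gaussOne n x * φ y) := by
    simp only [sub_mul]
  rw [h3, integral_sub h1 h2, integral_const_mul, Fc]
  ring

lemma uncurry_meas (hφm : StronglyMeasurable φ) (ε : ℝ) :
    Measurable (fun p : Rn n × Rn n =>
      (‖(gaussOne n (p.1 - ε • p.2) - gaussOne n p.1) * φ p.2‖₊ : ℝ≥0∞)) := by
  have h1 : Continuous fun p : Rn n × Rn n =>
      gaussOne n (p.1 - ε • p.2) - gaussOne n p.1 :=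
    (cont_gauss.comp (continuous_fst.sub (continuous_snd.const_smul ε))).sub
      (cont_gauss.comp continuous_fst)
  exact ((h1.measurable.mul (hφm.measurable.comp measurable_snd))).enorm

lemma bound_one (hφm : StronglyMeasurable φ) (hφi : Integrable φ) (ε : ℝ) :
    eLpNorm (fun x => Fc n ε φ x - (∫ y, φ y) * gaussOne n x) 1 volume ≤
      ∫⁻ y, ‖φ y‖₊ * Jl n (ε • y) := by
  rw [eLpNorm_one_eq_lintegral_enorm]
  calc ∫⁻ x, (‖Fc n ε φ x - (∫ y, φ y) * gaussOne n x‖₊ : ℝ≥0∞)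
      = ∫⁻ x, (‖∫ y, (gaussOne n (x - ε • y) - gaussOne n x) * φ y‖₊ : ℝ≥0∞) := by
        refine lintegral_congr fun x => ?_
        rw [diff_eq hφi]
    _ ≤ ∫⁻ x, ∫⁻ y, (‖(gaussOne n (x - ε • y) - gaussOne n x) * φ y‖₊ : ℝ≥0∞) := by
        exact lintegral_mono fun x => enorm_integral_le_lintegral_enorm _
    _ = ∫⁻ y, ∫⁻ x, (‖(gaussOne n (x - ε • y) - gaussOne n x) * φ y‖₊ : ℝ≥0∞) := by
        exact lintegral_lintegral_swap (uncurry_meas hφm ε).aemeasurable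
    _ = ∫⁻ y, ‖φ y‖₊ * Jl n (ε • y) := by
        refine lintegral_congr fun y => ?_
        rw [Jl, ← lintegral_const_mul' _ _ ENNReal.coe_ne_top]
        refine lintegral_congr fun x => ?_
        rw [nnnorm_mul, ENNReal.coe_mul, mul_comm]

lemma diff_abs_le (hφi : Integrable φ) (ε : ℝ) (x : Rn n) :
    (‖Fc n ε φ x - (∫ y, φ y) * gaussOne n x‖₊ : ℝ≥0∞) ≤
      ∫⁻ y, ENNReal.ofReal (min (cg n / 2 * (|ε| * ‖y‖)) (2 * cg n)) * ‖φ y‖₊ := by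
  rw [diff_eq hφi]
  refine (enorm_integral_le_lintegral_enorm _).trans (lintegral_mono fun y => ?_)
  rw [enorm_mul]
  refine mul_le_mul_left ?_ _
  rw [Real.enorm_eq_ofReal_abs]
  refine ENNReal.ofReal_le_ofReal (le_min ?_ ?_)
  · have h := gauss_lip (n := n) (x - ε • y) x
    have : ‖(x - ε • y) - x‖ = |ε| * ‖y‖ := by
      rw [show (x - ε • y) - x = -(ε • y) by abel, norm_neg, norm_smul, Real.norm_eq_abs]
    rw [this] at h
    exact h
  · have h1 := gauss_pos (n := n) (x - ε • y)
    have h2 := gauss_pos (n := n) x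
    have h3 := gauss_le (n := n) (x - ε • y)
    have h4 := gauss_le (n := n) x
    rw [abs_sub_le_iff]; constructor <;> nlinarith

lemma bound_inf (hφi : Integrable φ) (ε : ℝ) :
    eLpNorm (fun x => Fc n ε φ x - (∫ y, φ y) * gaussOne n x) ⊤ volume ≤
      ∫⁻ y, ENNReal.ofReal (min (cg n / 2 * (|ε| * ‖y‖)) (2 * cg n)) * ‖φ y‖₊ := by
  rw [eLpNorm_exponent_top, eLpNormEssSup]
  exact essSup_le_of_ae_le _ (Eventually.of_forall fun x => diff_abs_le hφi ε x)

lemma tendsto_Bone (hφm : StronglyMeasurable φ) (hφi : Integrable φ) :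
    Tendsto (fun ε : ℝ => ∫⁻ y, ‖φ y‖₊ * Jl n (ε • y)) (𝓝 0) (𝓝 0) := by
  have key := tendsto_lintegral_filter_of_dominated_convergence
    (μ := (volume : Measure (Rn n))) (l := 𝓝 (0 : ℝ))
    (F := fun (ε : ℝ) y => (‖φ y‖₊ : ℝ≥0∞) * Jl n (ε • y))
    (f := fun _ => 0)
    (bound := fun y => (‖φ y‖₊ : ℝ≥0∞) * (2 * IG n))
    (hF_meas := Eventually.of_forall fun ε =>
      hφm.measurable.enorm.mul (measurable_Jl.comp (measurable_id.const_smul ε)))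
    ?_ ?_ ?_
  · simpa using key
  · refine Eventually.of_forall fun ε => Eventually.of_forall fun y => ?_
    exact mul_le_mul_right (Jl_le _) _
  · rw [lintegral_mul_const' _ _ (ENNReal.mul_ne_top (by norm_num) IG_lt_top.ne)]
    exact ENNReal.mul_ne_top hφi.2.ne (ENNReal.mul_ne_top (by norm_num) IG_lt_top.ne)
  · refine Eventually.of_forall fun y => ?_
    have h1 : Tendsto (fun ε : ℝ => ε • y) (𝓝 0) (𝓝 (0 : Rn n)) := by
      have := (show Continuous fun ε : ℝ => ε • y from continuous_id.smul (continuous_const (y := y))).tendsto (0 : ℝ)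
      simpa only [id_eq, zero_smul] using this
    have h2 := tendsto_Jl.comp h1
    have := ENNReal.Tendsto.const_mul (a := ((‖φ y‖₊ : ℝ≥0∞))) h2
      (Or.inr ENNReal.coe_ne_top)
    simpa using this

lemma tendsto_Binf (hφm : StronglyMeasurable φ) (hφi : Integrable φ) :
    Tendsto (fun ε : ℝ =>
      ∫⁻ y, ENNReal.ofReal (min (cg n / 2 * (|ε| * ‖y‖)) (2 * cg n)) * ‖φ y‖₊)
      (𝓝 0) (𝓝 0) := by
  have key := tendsto_lintegral_filter_of_dominated_convergence
    (μ := (volume : Measure (Rn n))) (l := 𝓝 (0 : ℝ))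
    (F := fun (ε : ℝ) y =>
      ENNReal.ofReal (min (cg n / 2 * (|ε| * ‖y‖)) (2 * cg n)) * (‖φ y‖₊ : ℝ≥0∞))
    (f := fun _ => 0)
    (bound := fun y => ENNReal.ofReal (2 * cg n) * (‖φ y‖₊ : ℝ≥0∞))
    (hF_meas := Eventually.of_forall fun ε => by
      have hc : Continuous fun y : Rn n => min (cg n / 2 * (|ε| * ‖y‖)) (2 * cg n) :=
        (continuous_const.mul (continuous_const.mul continuous_norm)).min continuous_const
      exact (hc.measurable.ennreal_ofReal).mul hφm.measurable.enorm)
    ?_ ?_ ?_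
  · simpa using key
  · refine Eventually.of_forall fun ε => Eventually.of_forall fun y => ?_
    exact mul_le_mul_left (ENNReal.ofReal_le_ofReal (min_le_right _ _)) _
  · rw [lintegral_const_mul' _ _ ENNReal.ofReal_ne_top]
    exact ENNReal.mul_ne_top ENNReal.ofReal_ne_top hφi.2.ne
  · refine Eventually.of_forall fun y => ?_
    have hc : Tendsto (fun ε : ℝ => min (cg n / 2 * (|ε| * ‖y‖)) (2 * cg n)) (𝓝 0)
        (𝓝 (min (cg n / 2 * (|(0:ℝ)| * ‖y‖)) (2 * cg n))) := by
      exact ((continuous_const.mul ((continuous_abs.mul continuous_const))).min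
        continuous_const).tendsto 0
    have h0 : min (cg n / 2 * (|(0:ℝ)| * ‖y‖)) (2 * cg n) = 0 := by
      rw [abs_zero, zero_mul, mul_zero]
      exact min_eq_left (by nlinarith [cg_pos (n := n)])
    rw [h0] at hc
    have h2 := ENNReal.Tendsto.mul_const (b := ((‖φ y‖₊ : ℝ≥0∞))) (ENNReal.tendsto_ofReal hc)
      (Or.inr ENNReal.coe_ne_top)
    simpa using h2

lemma interp {f : Rn n → ℝ} {q : ℝ≥0∞} (hq1 : 1 < q) (hqt : q ≠ ⊤) {A B : ℝ≥0∞}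
    (hA : eLpNorm f ⊤ volume ≤ A) (hB : eLpNorm f 1 volume ≤ B) (hAt : A ≠ ⊤) :
    eLpNorm f q volume ≤ A ^ (1 - 1 / q.toReal) * B ^ (1 / q.toReal) := by
  have hq0 : q ≠ 0 := by positivity
  have hr1 : 1 < q.toReal := by
    rw [show (1:ℝ) = (1:ℝ≥0∞).toReal by simp]
    exact (ENNReal.toReal_lt_toReal (by simp) hqt).2 hq1
  set r := q.toReal with hr
  have hr0 : 0 < r := by linarith
  rw [eLpNorm_eq_lintegral_rpow_enorm_toReal hq0 hqt]
  have key : (∫⁻ x, (‖f x‖₊ : ℝ≥0∞) ^ r) ≤ A ^ (r - 1) * B := by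
    have hae : ∀ᵐ x ∂(volume : Measure (Rn n)),
        (‖f x‖₊ : ℝ≥0∞) ^ r ≤ A ^ (r - 1) * (‖f x‖₊ : ℝ≥0∞) := by
      filter_upwards [enorm_ae_le_eLpNormEssSup f (volume : Measure (Rn n))] with x hx
      have hx2 : (‖f x‖₊ : ℝ≥0∞) ≤ A := le_trans hx (by rwa [eLpNorm_exponent_top] at hA)
      calc (‖f x‖₊ : ℝ≥0∞) ^ r = (‖f x‖₊ : ℝ≥0∞) ^ (r - 1) * (‖f x‖₊ : ℝ≥0∞) ^ (1:ℝ) := by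
            rw [← ENNReal.rpow_add_of_nonneg _ _ (by linarith) zero_le_one]
            norm_num
        _ ≤ A ^ (r - 1) * (‖f x‖₊ : ℝ≥0∞) := by
            rw [ENNReal.rpow_one]
            exact mul_le_mul_left (ENNReal.rpow_le_rpow hx2 (by linarith)) _
    calc (∫⁻ x, (‖f x‖₊ : ℝ≥0∞) ^ r) ≤ ∫⁻ x, A ^ (r - 1) * (‖f x‖₊ : ℝ≥0∞) :=
          lintegral_mono_ae hae
      _ = A ^ (r - 1) * ∫⁻ x, (‖f x‖₊ : ℝ≥0∞) :=
          lintegral_const_mul' _ _ (ENNReal.rpow_ne_top_of_nonneg (by linarith) hAt)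
      _ ≤ A ^ (r - 1) * B := by
          refine mul_le_mul_right ?_ _
          rwa [eLpNorm_one_eq_lintegral_enorm] at hB
  calc (∫⁻ x, (‖f x‖₊ : ℝ≥0∞) ^ r) ^ (1 / r) ≤ (A ^ (r - 1) * B) ^ (1 / r) :=
        ENNReal.rpow_le_rpow key (by positivity)
    _ = A ^ (1 - 1 / r) * B ^ (1 / r) := by
        rw [ENNReal.mul_rpow_of_nonneg _ _ (by positivity), ← ENNReal.rpow_mul]
        congr 2
        field_simp


lemma Binf_ne_top (hφi : Integrable φ) (ε : ℝ) :
    (∫⁻ y, ENNReal.ofReal (min (cg n / 2 * (|ε| * ‖y‖)) (2 * cg n)) * ‖φ y‖₊) ≠ ⊤ := by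
  have h1 : (∫⁻ y, ENNReal.ofReal (min (cg n / 2 * (|ε| * ‖y‖)) (2 * cg n)) * (‖φ y‖₊ : ℝ≥0∞))
      ≤ ∫⁻ y, ENNReal.ofReal (2 * cg n) * (‖φ y‖₊ : ℝ≥0∞) :=
    lintegral_mono fun y => mul_le_mul_left
      (ENNReal.ofReal_le_ofReal (min_le_right _ _)) _
  refine ne_of_lt (lt_of_le_of_lt h1 ?_)
  rw [lintegral_const_mul' _ _ ENNReal.ofReal_ne_top]
  exact ENNReal.mul_lt_top ENNReal.ofReal_lt_top hφi.2

lemma tendsto_diff (hφm : StronglyMeasurable φ) (hφi : Integrable φ) {q : ℝ≥0∞} (hq : 1 ≤ q) :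
    Tendsto (fun ε : ℝ =>
      eLpNorm (fun x => Fc n ε φ x - (∫ y, φ y) * gaussOne n x) q volume) (𝓝 0) (𝓝 0) := by
  by_cases hqt : q = ⊤
  · subst hqt
    refine tendsto_of_tendsto_of_tendsto_of_le_of_le tendsto_const_nhds
      (tendsto_Binf hφm hφi) (fun ε => zero_le) (fun ε => bound_inf hφi ε)
  rcases eq_or_lt_of_le hq with hq1 | hq1
  · rw [← hq1]
    refine tendsto_of_tendsto_of_tendsto_of_le_of_le tendsto_const_nhds
      (tendsto_Bone hφm hφi) (fun ε => zero_le) (fun ε => bound_one hφm hφi ε)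
  · have hr1 : 1 < q.toReal := by
      rw [show (1:ℝ) = (1:ℝ≥0∞).toReal by simp]
      exact (ENNReal.toReal_lt_toReal (by simp) hqt).2 hq1
    have ha : (0:ℝ) < 1 - 1 / q.toReal := by
      have : 1 / q.toReal < 1 := by
        rw [div_lt_one (by linarith)]; exact hr1
      linarith
    have hb : (0:ℝ) < 1 / q.toReal := by positivity
    have hle : ∀ ε : ℝ,
        eLpNorm (fun x => Fc n ε φ x - (∫ y, φ y) * gaussOne n x) q volume ≤
        (∫⁻ y, ENNReal.ofReal (min (cg n / 2 * (|ε| * ‖y‖)) (2 * cg n)) * ‖φ y‖₊)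
            ^ (1 - 1 / q.toReal) *
          (∫⁻ y, ‖φ y‖₊ * Jl n (ε • y)) ^ (1 / q.toReal) := fun ε =>
      interp hq1 hqt (bound_inf hφi ε) (bound_one hφm hφi ε) (Binf_ne_top hφi ε)
    have hD : Tendsto (fun ε : ℝ =>
        (∫⁻ y, ENNReal.ofReal (min (cg n / 2 * (|ε| * ‖y‖)) (2 * cg n)) * ‖φ y‖₊)
            ^ (1 - 1 / q.toReal) *
          (∫⁻ y, ‖φ y‖₊ * Jl n (ε • y)) ^ (1 / q.toReal)) (𝓝 0) (𝓝 0) := by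
      have hA := ((ENNReal.continuous_rpow_const (y := 1 - 1/q.toReal)).tendsto 0).comp (tendsto_Binf hφm hφi)
      have hB := ((ENNReal.continuous_rpow_const (y := 1/q.toReal)).tendsto 0).comp (tendsto_Bone hφm hφi)
      rw [Function.comp_def] at hA hB
      have hA0 : ((0:ℝ≥0∞)) ^ (1 - 1 / q.toReal) = 0 := ENNReal.zero_rpow_of_pos ha
      have hB0 : ((0:ℝ≥0∞)) ^ (1 / q.toReal) = 0 := ENNReal.zero_rpow_of_pos hb
      have := ENNReal.Tendsto.mul (hA.congr' (Eventually.of_forall fun _ => rfl))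
        (Or.inr (by simp)) (hB.congr' (Eventually.of_forall fun _ => rfl))
        (Or.inr (by rw [hA0]; simp))
      rw [hA0, hB0, mul_zero] at this
      exact this
    exact tendsto_of_tendsto_of_tendsto_of_le_of_le tendsto_const_nhds hD
      (fun ε => zero_le) hle

lemma eLpNorm_comp_smul {f : Rn n → ℝ} (hf : AEStronglyMeasurable f volume) {r : ℝ}
    (hr : r ≠ 0) (q : ℝ≥0∞) :
    eLpNorm (fun x => f (r • x)) q volume =
      ENNReal.ofReal |((r ^ n : ℝ))⁻¹| ^ (1 / q).toReal * eLpNorm f q volume := by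
  have hfr : Module.finrank ℝ (Rn n) = n := finrank_euclideanSpace_fin
  have hmap : Measure.map (fun x : Rn n => r • x) volume =
      ENNReal.ofReal |((r ^ n : ℝ))⁻¹| • volume := by
    have h := MeasureTheory.Measure.map_addHaar_smul (μ := (volume : Measure (Rn n))) hr
    rw [hfr] at h
    exact h
  have hc0 : ENNReal.ofReal |((r ^ n : ℝ))⁻¹| ≠ 0 := by
    rw [Ne, ENNReal.ofReal_eq_zero, not_le]
    have : r ^ n ≠ 0 := pow_ne_zero _ hr
    positivity
  have hgm : AEStronglyMeasurable f (Measure.map (fun x : Rn n => r • x) volume) := by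
    rw [hmap]
    exact hf.mono_ac Measure.smul_absolutelyContinuous
  have h1 : eLpNorm (fun x => f (r • x)) q volume =
      eLpNorm f q (Measure.map (fun x : Rn n => r • x) volume) := by
    rw [eLpNorm_map_measure hgm (measurable_id.const_smul r).aemeasurable]
    rfl
  rw [h1, hmap, eLpNorm_smul_measure_of_ne_zero hc0, smul_eq_mul]

lemma heatKernel_eq {t : ℝ} (ht : 0 < t) (z : Rn n) :
    heatKernel n t z = t ^ (-(n:ℝ)/2) * gaussOne n ((t ^ (-(1:ℝ)/2) : ℝ) • z) := by
  rw [heatKernel, gaussOne_eq]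
  have h1 : (4 * π * t : ℝ) ^ (-(n:ℝ)/2) = (4 * π) ^ (-(n:ℝ)/2) * t ^ (-(n:ℝ)/2) :=
    Real.mul_rpow (by positivity) ht.le
  have e1 : ((t ^ (-(1:ℝ)/2) : ℝ)) ^ 2 = t ^ (-1:ℝ) := by
    rw [← Real.rpow_natCast (t ^ (-(1:ℝ)/2)) 2, ← Real.rpow_mul ht.le]
    norm_num
  have h2 : ‖(t ^ (-(1:ℝ)/2) : ℝ) • z‖ ^ 2 = t⁻¹ * ‖z‖ ^ 2 := by
    rw [norm_smul, Real.norm_eq_abs, mul_pow, sq_abs, e1, Real.rpow_neg_one]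
  have h3 : -‖z‖ ^ 2 / (4 * t) = -(t⁻¹ * ‖z‖ ^ 2) / 4 := by
    field_simp
  rw [h1, h2, cg, h3]
  ring

lemma heatSG_eq_Fc (hφi : Integrable φ) {t : ℝ} (ht : 0 < t) :
    (fun x => ∫ y, heatKernel n t (x - y) * φ y) =
      fun x => t ^ (-(n:ℝ)/2) * Fc n (t ^ (-(1:ℝ)/2)) φ ((t ^ (-(1:ℝ)/2) : ℝ) • x) := by
  funext x
  rw [Fc, ← integral_const_mul]
  refine integral_congr_ae (Eventually.of_forall fun y => ?_)
  show heatKernel n t (x - y) * φ y = _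
  rw [heatKernel_eq ht, smul_sub]
  ring


lemma gauss_rpow_eq {r : ℝ} (x : Rn n) :
    (gaussOne n x) ^ r = cg n ^ r * rexp (-(r/4) * ‖x‖ ^ 2) := by
  rw [gaussOne_eq, Real.mul_rpow cg_pos.le (exp_pos _).le]
  congr 1
  rw [Real.rpow_def_of_pos (exp_pos _), Real.log_exp]
  congr 1
  ring

lemma gauss_rpow_integrable {r : ℝ} (hr : 0 < r) :
    Integrable (fun x : Rn n => (gaussOne n x) ^ r) := by
  have h := (integrable_gauss (n := n) (show (0:ℝ) < r/4 by positivity)).const_mul (cg n ^ r)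
  exact h.congr (Eventually.of_forall fun x => (gauss_rpow_eq x).symm)

lemma integral_gauss_rpow {r : ℝ} (hr : 0 < r) :
    ∫ x : Rn n, (gaussOne n x) ^ r = cg n ^ r * (4 * π / r) ^ ((n:ℝ)/2) := by
  have h1 : ∫ x : Rn n, (gaussOne n x) ^ r
      = ∫ x : Rn n, cg n ^ r * rexp (-(r/4) * ‖x‖ ^ 2) := by
    exact integral_congr_ae (Eventually.of_forall fun x => gauss_rpow_eq x)
  rw [h1, integral_const_mul]
  have h2 := GaussianFourier.integral_rexp_neg_mul_sq_norm (V := Rn n)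
    (show (0:ℝ) < r/4 by positivity)
  rw [h2, show Module.finrank ℝ (Rn n) = n from finrank_euclideanSpace_fin]
  congr 2
  field_simp

lemma eLpNorm_gauss_fin {q : ℝ≥0∞} (hq : 1 ≤ q) (hqt : q ≠ ⊤) :
    eLpNorm (gaussOne n) q volume =
      ENNReal.ofReal ((4 * π) ^ (-(expo n q)) * q.toReal ^ (-(n:ℝ)/(2 * q.toReal))) := by
  have hq0 : q ≠ 0 := by positivity
  set r := q.toReal with hrdef
  have hr0 : 0 < r := ENNReal.toReal_pos hq0 hqt
  rw [eLpNorm_eq_lintegral_rpow_enorm_toReal hq0 hqt]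
  have hcongr : ∀ x : Rn n, ‖gaussOne n x‖ₑ ^ r
      = ENNReal.ofReal ((gaussOne n x) ^ r) := fun x => by
    rw [Real.enorm_eq_ofReal_abs, abs_of_pos (gauss_pos x),
      ENNReal.ofReal_rpow_of_pos (gauss_pos x)]
  rw [lintegral_congr hcongr,
    ← ofReal_integral_eq_lintegral_ofReal (gauss_rpow_integrable hr0)
      (Eventually.of_forall fun x => Real.rpow_nonneg (gauss_pos x).le r),
    integral_gauss_rpow hr0]
  have hVpos : 0 < cg n ^ r * (4 * π / r) ^ ((n:ℝ)/2) := by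
    have := cg_pos (n := n)
    have h4 : (0:ℝ) < 4 * π / r := by positivity
    positivity
  rw [ENNReal.ofReal_rpow_of_pos hVpos]
  congr 1
  -- real computation
  have ha : (0:ℝ) < 4 * π := by positivity
  have hinv : (1/q).toReal = 1/r := by
    rw [one_div, ENNReal.toReal_inv, one_div]
  have hexpo : -(expo n q) = -((n:ℝ)/2) + (n:ℝ)/(2*r) := by
    rw [expo, hinv]
    field_simp
    ring
  rw [Real.mul_rpow (Real.rpow_nonneg cg_pos.le r) (Real.rpow_nonneg (by positivity) _),
    ← Real.rpow_mul cg_pos.le, mul_one_div, div_self hr0.ne', Real.rpow_one,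
    ← Real.rpow_mul (by positivity : (0:ℝ) ≤ 4 * π / r),
    show ((n:ℝ)/2) * (1/r) = (n:ℝ)/(2*r) by field_simp,
    Real.div_rpow ha.le hr0.le, div_eq_mul_inv, ← Real.rpow_neg hr0.le,
    cg, hexpo, Real.rpow_add ha, neg_div 2 (n:ℝ)]
  ring_nf

lemma ennnorm_gauss (x : Rn n) : (‖gaussOne n x‖₊ : ℝ≥0∞) = ENNReal.ofReal (gaussOne n x) := by
  rw [← enorm_eq_nnnorm, Real.enorm_eq_ofReal_abs, abs_of_pos (gauss_pos x)]

lemma eLpNorm_gauss_top :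
    eLpNorm (gaussOne n) ⊤ volume = ENNReal.ofReal ((4 * π) ^ (-(n:ℝ)/2)) := by
  have hle : eLpNorm (gaussOne n) ⊤ volume ≤ ENNReal.ofReal (cg n) := by
    rw [eLpNorm_exponent_top]
    exact eLpNormEssSup_le_of_ae_bound (C := cg n) (Eventually.of_forall fun x => by
      rw [Real.norm_eq_abs, abs_of_pos (gauss_pos x)]; exact gauss_le x)
  have hge : ENNReal.ofReal (cg n) ≤ eLpNorm (gaussOne n) ⊤ volume := by
    by_contra hcon
    rw [not_le] at hcon
    rw [eLpNorm_exponent_top] at hcon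
    obtain ⟨c', hc'0, h1, h2⟩ := (ENNReal.lt_iff_exists_real_btwn).1 hcon
    have hc'cg : c' < cg n := by
      rwa [ENNReal.ofReal_lt_ofReal_iff cg_pos] at h2
    set U := {x : Rn n | c' < gaussOne n x} with hU
    have hUopen : IsOpen U := isOpen_lt continuous_const cont_gauss
    have h0U : (0 : Rn n) ∈ U := by
      have : gaussOne n 0 = cg n := by
        rw [gaussOne_eq]; simp
      simpa [hU, this] using hc'cg
    have hpos : 0 < volume U := hUopen.measure_pos volume ⟨0, h0U⟩
    have hae := enorm_ae_le_eLpNormEssSup (gaussOne n) (volume : Measure (Rn n))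
    have hnull : volume U = 0 := by
      refine measure_mono_null ?_ (ae_iff.1 hae)
      intro x hx
      simp only [Set.mem_setOf_eq, not_le]
      calc eLpNormEssSup (gaussOne n) volume < ENNReal.ofReal c' := h1
        _ ≤ ENNReal.ofReal (gaussOne n x) := ENNReal.ofReal_le_ofReal (le_of_lt hx)
        _ = (‖gaussOne n x‖₊ : ℝ≥0∞) := (ennnorm_gauss x).symm
    exact absurd hnull hpos.ne'
  have : eLpNorm (gaussOne n) ⊤ volume = ENNReal.ofReal (cg n) := le_antisymm hle hge
  rw [this, cg, neg_div]

lemma eLpNorm_gauss_ne_top {q : ℝ≥0∞} (hq : 1 ≤ q) :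
    eLpNorm (gaussOne n) q volume ≠ ⊤ := by
  by_cases hqt : q = ⊤
  · rw [hqt, eLpNorm_gauss_top]; exact ENNReal.ofReal_ne_top
  · rw [eLpNorm_gauss_fin hq hqt]; exact ENNReal.ofReal_ne_top


lemma main_tendsto_Fc (hφm : StronglyMeasurable φ) (hφi : Integrable φ) {q : ℝ≥0∞}
    (hq : 1 ≤ q) :
    Tendsto (fun ε : ℝ => eLpNorm (Fc n ε φ) q volume) (𝓝 0)
      (𝓝 (ENNReal.ofReal |∫ y, φ y| * eLpNorm (gaussOne n) q volume)) := by
  set c0 := ∫ y, φ y with hc0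
  set N := ENNReal.ofReal |c0| * eLpNorm (gaussOne n) q volume with hN
  have hN_eq : N = eLpNorm (fun x => c0 * gaussOne n x) q volume := by
    have h1 : (fun x => c0 * gaussOne n x) = c0 • gaussOne n := rfl
    rw [h1, eLpNorm_const_smul, hN, Real.enorm_eq_ofReal_abs]
  have hN_ne : N ≠ ⊤ := ENNReal.mul_ne_top ENNReal.ofReal_ne_top (eLpNorm_gauss_ne_top hq)
  have hd := tendsto_diff hφm hφi hq
  have hFm' : ∀ ε : ℝ, AEStronglyMeasurable (Fc n ε φ) volume := fun ε =>
    (Fc_sm hφm ε).aestronglyMeasurable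
  have hGm : AEStronglyMeasurable (fun x => c0 * gaussOne n x) (volume : Measure (Rn n)) :=
    (continuous_const.mul cont_gauss).aestronglyMeasurable
  have hup : ∀ ε : ℝ, eLpNorm (Fc n ε φ) q volume ≤
      N + eLpNorm (fun x => Fc n ε φ x - c0 * gaussOne n x) q volume := by
    intro ε
    have h1 : Fc n ε φ = fun x => (Fc n ε φ x - c0 * gaussOne n x) + c0 * gaussOne n x := by
      funext x; ring
    calc eLpNorm (Fc n ε φ) q volume
        = eLpNorm (fun x => (Fc n ε φ x - c0 * gaussOne n x) + c0 * gaussOne n x) q volume := by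
          rw [← h1]
      _ ≤ eLpNorm (fun x => Fc n ε φ x - c0 * gaussOne n x) q volume +
            eLpNorm (fun x => c0 * gaussOne n x) q volume :=
          eLpNorm_add_le ((hFm' ε).sub hGm) hGm hq
      _ = N + eLpNorm (fun x => Fc n ε φ x - c0 * gaussOne n x) q volume := by
          rw [← hN_eq, add_comm]
  have hlow : ∀ ε : ℝ, N - eLpNorm (fun x => Fc n ε φ x - c0 * gaussOne n x) q volume ≤
      eLpNorm (Fc n ε φ) q volume := by
    intro ε
    rw [tsub_le_iff_right]
    have h1 : (fun x => c0 * gaussOne n x) =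
        fun x => Fc n ε φ x + -(Fc n ε φ x - c0 * gaussOne n x) := by
      funext x; ring
    calc N = eLpNorm (fun x => Fc n ε φ x + -(Fc n ε φ x - c0 * gaussOne n x)) q volume := by
          rw [hN_eq, ← h1]
      _ ≤ eLpNorm (Fc n ε φ) q volume +
            eLpNorm (fun x => -(Fc n ε φ x - c0 * gaussOne n x)) q volume :=
          eLpNorm_add_le (hFm' ε) ((hFm' ε).sub hGm).neg hq
      _ = eLpNorm (Fc n ε φ) q volume +
            eLpNorm (fun x => Fc n ε φ x - c0 * gaussOne n x) q volume := by
          congr 1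
          exact eLpNorm_neg _ _ _
  have htlow : Tendsto (fun ε : ℝ =>
      N - eLpNorm (fun x => Fc n ε φ x - c0 * gaussOne n x) q volume) (𝓝 0) (𝓝 N) := by
    have := ENNReal.Tendsto.sub (tendsto_const_nhds (x := N)) hd (Or.inl hN_ne)
    simpa using this
  have htup : Tendsto (fun ε : ℝ =>
      N + eLpNorm (fun x => Fc n ε φ x - c0 * gaussOne n x) q volume) (𝓝 0) (𝓝 N) := by
    have := (tendsto_const_nhds (x := N)).add hd
    simpa using this
  exact tendsto_of_tendsto_of_tendsto_of_le_of_le htlow htup hlow hup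

lemma key_eq (hφm : StronglyMeasurable φ) (q : ℝ≥0∞) {t : ℝ} (ht : 0 < t) :
    ENNReal.ofReal (t ^ expo n q) *
      eLpNorm (fun x : Rn n => t ^ (-(n:ℝ)/2) *
        Fc n (t ^ (-(1:ℝ)/2)) φ ((t ^ (-(1:ℝ)/2) : ℝ) • x)) q volume =
    eLpNorm (Fc n (t ^ (-(1:ℝ)/2)) φ) q volume := by
  set r := (t ^ (-(1:ℝ)/2) : ℝ) with hrdef
  have hrpos : 0 < r := rpow_pos_of_pos ht _
  have hr0 : r ≠ 0 := hrpos.ne'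
  have h1 : (fun x : Rn n => t ^ (-(n:ℝ)/2) * Fc n r φ (r • x)) =
      (t ^ (-(n:ℝ)/2) : ℝ) • (fun x : Rn n => Fc n r φ (r • x)) := rfl
  rw [h1, eLpNorm_const_smul, eLpNorm_comp_smul (Fc_sm hφm r).aestronglyMeasurable hr0 q]
  have hc1 : ‖(t ^ (-(n:ℝ)/2) : ℝ)‖ₑ = ENNReal.ofReal (t ^ (-(n:ℝ)/2)) := by
    rw [Real.enorm_eq_ofReal_abs, abs_of_pos (rpow_pos_of_pos ht _)]
  have hc2 : |((r ^ n : ℝ))⁻¹| = t ^ ((n:ℝ)/2) := by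
    rw [hrdef, ← Real.rpow_natCast (t ^ (-(1:ℝ)/2)) n, ← Real.rpow_mul ht.le,
      ← Real.rpow_neg ht.le]
    rw [abs_of_pos (rpow_pos_of_pos ht _)]
    congr 1
    ring
  rw [hc1, hc2]
  set s := (1/q).toReal with hs
  have hc3 : ENNReal.ofReal (t ^ ((n:ℝ)/2)) ^ s = ENNReal.ofReal (t ^ (((n:ℝ)/2) * s)) := by
    rw [ENNReal.ofReal_rpow_of_pos (rpow_pos_of_pos ht _), ← Real.rpow_mul ht.le]
  rw [hc3]
  have hcoef : ENNReal.ofReal (t ^ expo n q) * (ENNReal.ofReal (t ^ (-(n:ℝ)/2)) *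
      ENNReal.ofReal (t ^ (((n:ℝ)/2) * s))) = 1 := by
    rw [← ENNReal.ofReal_mul (rpow_pos_of_pos ht _).le,
      ← ENNReal.ofReal_mul (rpow_pos_of_pos ht _).le,
      ← Real.rpow_add ht, ← Real.rpow_add ht]
    have : expo n q + ((-(n:ℝ)/2) + ((n:ℝ)/2) * s) = 0 := by
      rw [expo, ← hs]; ring
    rw [this, Real.rpow_zero, ENNReal.ofReal_one]
  calc ENNReal.ofReal (t ^ expo n q) * (ENNReal.ofReal (t ^ (-(n:ℝ)/2)) *
        (ENNReal.ofReal (t ^ (((n:ℝ)/2) * s)) * eLpNorm (Fc n r φ) q volume))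
      = (ENNReal.ofReal (t ^ expo n q) * (ENNReal.ofReal (t ^ (-(n:ℝ)/2)) *
          ENNReal.ofReal (t ^ (((n:ℝ)/2) * s)))) * eLpNorm (Fc n r φ) q volume := by ring
    _ = eLpNorm (Fc n r φ) q volume := by rw [hcoef, one_mul]

end S17

end

/-- Remark B.2: `lim_{t→∞} t^{(n/2)(1−1/q)} ‖e^{tΔ}φ‖_q = |c₀| ‖G₁‖_q`,
together with the explicit value of `‖G₁‖_q`. -/
theorem stmt17 (n : ℕ) (hn : 1 ≤ n) (φ : Rn n → ℝ)
    (hφ : MemLp φ 1 (volume : Measure (Rn n))) (q : ℝ≥0∞) (hq : 1 ≤ q) :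
    Tendsto
        (fun t : ℝ => ENNReal.ofReal (t ^ expo n q) *
          eLpNorm (heatSG n t φ) q (volume : Measure (Rn n)))
        atTop
        (nhds (ENNReal.ofReal |∫ y : Rn n, φ y| *
          eLpNorm (gaussOne n) q (volume : Measure (Rn n)))) ∧
      (q ≠ ⊤ → eLpNorm (gaussOne n) q (volume : Measure (Rn n)) =
        ENNReal.ofReal
          ((4 * π) ^ (-(expo n q)) * q.toReal ^ (-(n : ℝ) / (2 * q.toReal)))) ∧
      (q = ⊤ → eLpNorm (gaussOne n) ⊤ (volume : Measure (Rn n)) =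
        ENNReal.ofReal ((4 * π) ^ (-(n : ℝ) / 2))) := by
  refine ⟨?_, fun hqt => S17.eLpNorm_gauss_fin hq hqt, fun _ => S17.eLpNorm_gauss_top⟩
  have hφi : Integrable φ := memLp_one_iff_integrable.1 hφ
  set ψ := hφ.aestronglyMeasurable.mk φ with hψdef
  have hψm : StronglyMeasurable ψ := hφ.aestronglyMeasurable.stronglyMeasurable_mk
  have heq : φ =ᵐ[(volume : Measure (Rn n))] ψ := hφ.aestronglyMeasurable.ae_eq_mk
  have hψi : Integrable ψ := hφi.congr heq
  have hInt : (∫ y, φ y) = ∫ y, ψ y := integral_congr_ae heq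
  have hε : Tendsto (fun t : ℝ => t ^ (-(1:ℝ)/2)) atTop (𝓝 0) := by
    have h := tendsto_rpow_neg_atTop (show (0:ℝ) < 1/2 by norm_num)
    refine h.congr fun t => ?_
    norm_num
  have hF := (S17.main_tendsto_Fc hψm hψi hq).comp hε
  have hF' : Tendsto (fun t : ℝ => eLpNorm (S17.Fc n (t ^ (-(1:ℝ)/2)) ψ) q volume) atTop
      (𝓝 (ENNReal.ofReal |∫ y, φ y| * eLpNorm (gaussOne n) q volume)) := by
    rw [hInt]
    exact hF.congr fun t => rfl
  refine Tendsto.congr' ?_ hF'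
  filter_upwards [eventually_gt_atTop (0 : ℝ)] with t ht
  have hsg : heatSG n t φ = fun x : Rn n =>
      t ^ (-(n:ℝ)/2) * S17.Fc n (t ^ (-(1:ℝ)/2)) ψ ((t ^ (-(1:ℝ)/2) : ℝ) • x) := by
    rw [heatSG, if_neg ht.ne']
    have h1 : (fun x : Rn n => ∫ y, heatKernel n t (x - y) * φ y) =
        fun x : Rn n => ∫ y, heatKernel n t (x - y) * ψ y := by
      funext x
      exact integral_congr_ae (heq.mono fun y hy => by simp only []; rw [hy])
    rw [h1, S17.heatSG_eq_Fc hψi ht]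
  rw [hsg, S17.key_eq hψm q ht]
end
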